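/- arXiv:2011.00234 — 5 statements merged into one kernel-verified Lean document; each statement's English description precedes it below -/
import Mathlib

section
/- Let d ≥ 2, 0 < α < 2, γ ∈ ℝ, q > α − 1, δ ∈ ℝ and β ≥ 0. There exist constants 0 < c ≤ C, depending only on d, α, γ, β, q, δ, such that for every R > 0, every point x = (0̃, x_d) with 0 < x_d ≤ 2R/3, and all a₂, a₃ with 3x_d/2 ≤ a₃ ≤ a₂ ≤ R, one has c · R^{γ+α−q} (F(a₃/R; γ+α−q−1, β) − F(a₂/R; γ+α−q−1, β)) ≤ ∫_{D(R,a₂)∖D(R,a₃)} f(y; γ, β, q, δ, x) dy ≤ C · R^{γ+α−q} (F(a₃/R; γ+α−q−1, β) − F(a₂/R; γ+α−q−1, β)). -/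
open MeasureTheory Real
open Module

noncomputable section

/-- Points of `ℝ^d`, written as pairs `(x̃, x_d) ∈ ℝ^{d-1} × ℝ` (here `m = d - 1`). -/
abbrev Pt (m : ℕ) := EuclideanSpace ℝ (Fin m) × ℝ

/-- The Euclidean norm on `Pt m`. -/
noncomputable def nrm {m : ℕ} (x : Pt m) : ℝ := Real.sqrt (‖x.1‖ ^ 2 + x.2 ^ 2)

/-- The box `D_w̃(a,b) = {y = (ỹ, y_d) : |ỹ - w̃| < a, 0 < y_d < b}`. -/
def Dbox {m : ℕ} (w : EuclideanSpace ℝ (Fin m)) (a b : ℝ) : Set (Pt m) :=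
  {y | ‖y.1 - w‖ < a ∧ 0 < y.2 ∧ y.2 < b}

/-- The function `f(y; γ, β, q, δ, x)`. -/
noncomputable def ff {m : ℕ} (d : ℕ) (α R γ β q δ : ℝ) (x y : Pt m) : ℝ :=
  y.2 ^ γ * nrm (x - y) ^ (-(d : ℝ) + α - q) * (Real.log (1 + 2 * R / y.2)) ^ β *
    (Real.log (1 + nrm (x - y) / min (max x.2 y.2) (nrm (x - y)))) ^ δ

/-- The function `F(u; γ', β) = ∫_u^1 h^{γ'} (log(2/h))^β dh`. -/
noncomputable def Ff (γ' β : ℝ) (u : ℝ) : ℝ := ∫ h in u..(1 : ℝ), h ^ γ' * (Real.log (2 / h)) ^ β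


private lemma two_log_pos : (0:ℝ) < Real.log 2 := Real.log_pos (by norm_num)

/-- auxiliary constant -/
private def Bconst (δ ε : ℝ) : ℝ := (if 0 < δ then Real.log 2 + δ / ε else Real.log 2) ^ δ

private lemma Bconst_pos {δ ε : ℝ} (hε : 0 < ε) : 0 < Bconst δ ε := by
  have h2 := two_log_pos
  unfold Bconst
  split_ifs with h
  · have : 0 < δ / ε := div_pos h hε
    exact Real.rpow_pos_of_pos (by linarith) _
  · exact Real.rpow_pos_of_pos h2 _

private lemma logpow_le {δ ε u : ℝ} (hε : 0 < ε) (hu : 1 ≤ u) :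
    Real.log (1 + u) ^ δ ≤ Bconst δ ε * u ^ ε := by
  have hu0 : 0 < u := lt_of_lt_of_le one_pos hu
  have h2 := two_log_pos
  have hN : Real.log 2 ≤ Real.log (1 + u) := Real.log_le_log (by norm_num) (by linarith)
  have hN0 : 0 < Real.log (1 + u) := lt_of_lt_of_le h2 hN
  unfold Bconst
  split_ifs with hδ
  · set c := ε / δ with hc
    have hc0 : 0 < c := div_pos hε hδ
    have huc : (1:ℝ) ≤ u ^ c := Real.one_le_rpow hu hc0.le
    have hlog : Real.log u ≤ u ^ c / c := by
      have h1 : Real.log (u ^ c) ≤ u ^ c - 1 :=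
        Real.log_le_sub_one_of_pos (Real.rpow_pos_of_pos hu0 c)
      rw [Real.log_rpow hu0] at h1
      rw [le_div_iff₀ hc0]
      nlinarith
    have hinv : δ / ε = 1 / c := by rw [hc, one_div_div]
    have hkey : Real.log (1 + u) ≤ (Real.log 2 + δ / ε) * u ^ c := by
      have l1 : Real.log (1 + u) ≤ Real.log (2 * u) :=
        Real.log_le_log (by linarith) (by linarith)
      rw [Real.log_mul (by norm_num) (ne_of_gt hu0)] at l1
      have l2 : Real.log 2 ≤ Real.log 2 * u ^ c := by nlinarith
      rw [hinv]
      have : u ^ c / c = (1 / c) * u ^ c := by ring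
      nlinarith
    calc Real.log (1 + u) ^ δ ≤ ((Real.log 2 + δ / ε) * u ^ c) ^ δ :=
          Real.rpow_le_rpow hN0.le hkey hδ.le
      _ = (Real.log 2 + δ / ε) ^ δ * (u ^ c) ^ δ := by
          have hb : 0 < Real.log 2 + δ / ε := by
            have : 0 < δ / ε := div_pos hδ hε
            linarith
          exact Real.mul_rpow hb.le (Real.rpow_nonneg hu0.le _)
      _ = (Real.log 2 + δ / ε) ^ δ * u ^ ε := by
          rw [← Real.rpow_mul hu0.le]
          congr 1
          rw [hc]; field_simp
  · push_neg at hδ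
    have h1 : Real.log (1 + u) ^ δ ≤ Real.log 2 ^ δ :=
      Real.rpow_le_rpow_of_nonpos h2 hN hδ
    have h2' : (1:ℝ) ≤ u ^ ε := Real.one_le_rpow hu hε.le
    have h3 : (0:ℝ) < Real.log 2 ^ δ := Real.rpow_pos_of_pos h2 _
    nlinarith

private def Aconst (δ : ℝ) : ℝ := min (Real.log 2 ^ δ) (Real.log 7 ^ δ)

private lemma Aconst_pos (δ : ℝ) : 0 < Aconst δ :=
  lt_min (Real.rpow_pos_of_pos two_log_pos δ)
    (Real.rpow_pos_of_pos (Real.log_pos (by norm_num)) δ)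


private lemma nrm_eq {k : ℕ} (xd t : ℝ) (z : EuclideanSpace ℝ (Fin k)) :
    nrm (((0 : EuclideanSpace ℝ (Fin k)), xd) - (z, t)) =
      Real.sqrt (‖z‖ ^ 2 + (xd - t) ^ 2) := by
  simp [nrm, norm_neg, zero_sub]

set_option maxHeartbeats 1000000 in
private lemma ff_upper (d : ℕ) (hd : 2 ≤ d) {α γ q δ β ε R xd t : ℝ}
    (hβ : 0 ≤ β) (hε : 0 < ε) (he : -(d:ℝ) + α - q ≤ 0)
    (hxd : 0 < xd) (hxt : 3 * xd ≤ 2 * t) (hR : 0 < R)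
    (z : EuclideanSpace ℝ (Fin (d - 1))) :
    ff d α R γ β q δ ((0 : EuclideanSpace ℝ (Fin (d - 1))), xd) (z, t) ≤
      ((6:ℝ) ^ (-(-(d:ℝ) + α - q)) * 6 ^ |δ| * Bconst δ ε) *
        (t ^ (γ - ε) * Real.log (1 + 2 * R / t) ^ β *
          (‖z‖ + t) ^ (-(d:ℝ) + α - q + ε)) := by
  set e : ℝ := -(d:ℝ) + α - q with he_def
  have ht : 0 < t := by linarith
  have hz0 : 0 ≤ ‖z‖ := norm_nonneg z
  set s : ℝ := ‖z‖ + t with hs_def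
  have hs : 0 < s := by positivity
  set r : ℝ := Real.sqrt (‖z‖ ^ 2 + (xd - t) ^ 2) with hr_def
  have hxdt : xd < t := by linarith
  -- basic bounds on r
  have hzr : ‖z‖ ≤ r := by
    have h := Real.sqrt_le_sqrt (show ‖z‖ ^ 2 ≤ ‖z‖ ^ 2 + (xd - t) ^ 2 by nlinarith)
    rwa [Real.sqrt_sq hz0] at h
  have htr : t / 3 ≤ r := by
    have h := Real.sqrt_le_sqrt (show (t / 3) ^ 2 ≤ ‖z‖ ^ 2 + (xd - t) ^ 2 by nlinarith)
    rwa [Real.sqrt_sq (by linarith)] at h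
  have hr0 : 0 < r := lt_of_lt_of_le (by linarith) htr
  have hrs : r ≤ s := by
    have h := Real.sqrt_le_sqrt (show ‖z‖ ^ 2 + (xd - t) ^ 2 ≤ s ^ 2 by nlinarith)
    rwa [Real.sqrt_sq hs.le] at h
  have hs6 : s / 6 ≤ r := by linarith
  -- min
  set mn : ℝ := min t r with hmn_def
  have hmn_lb : t / 3 ≤ mn := le_min (by linarith) htr
  have hmn0 : 0 < mn := lt_of_lt_of_le (by linarith) hmn_lb
  have hmnr : mn ≤ r := min_le_right _ _
  have hmnt : mn ≤ t := min_le_left _ _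
  set ρ : ℝ := r / mn with hρ_def
  have h1ρ : 1 ≤ ρ := (one_le_div hmn0).2 hmnr
  set u : ℝ := s / t with hu_def
  have hu : 1 ≤ u := (one_le_div ht).2 (by linarith)
  have hu0 : 0 < u := lt_of_lt_of_le one_pos hu
  have hut : u * t = s := div_mul_cancel₀ s (ne_of_gt ht)
  set M : ℝ := Real.log (1 + ρ) with hM_def
  set N : ℝ := Real.log (1 + u) with hN_def
  have h2 := two_log_pos
  have hM2 : Real.log 2 ≤ M := Real.log_le_log (by norm_num) (by linarith)
  have hN2 : Real.log 2 ≤ N := Real.log_le_log (by norm_num) (by linarith)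
  have hM0 : 0 < M := lt_of_lt_of_le h2 hM2
  have hN0 : 0 < N := lt_of_lt_of_le h2 hN2
  -- ρ ≤ 3u
  have hρu : ρ ≤ 3 * u := by
    rw [hρ_def, div_le_iff₀ hmn0]
    nlinarith
  -- M ≤ 6N
  have hM6N : M ≤ 6 * N := by
    have l1 : M ≤ Real.log (4 * u) := Real.log_le_log (by linarith) (by linarith)
    have l2 : Real.log (4 * u) = Real.log 4 + Real.log u :=
      Real.log_mul (by norm_num) (ne_of_gt hu0)
    have l3 : Real.log 4 = 2 * Real.log 2 := by
      rw [show (4:ℝ) = 2 ^ (2:ℕ) by norm_num, Real.log_pow]; push_cast; ring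
    have l4 : Real.log u ≤ N := Real.log_le_log hu0 (by linarith)
    nlinarith
  -- N ≤ 6M
  have hNM : N ≤ 6 * M := by
    rcases le_or_gt u 6 with h6 | h6
    · have n1 : N ≤ Real.log 7 := Real.log_le_log (by linarith) (by linarith)
      have n2 : Real.log 7 ≤ 3 * Real.log 2 := by
        have : Real.log 7 ≤ Real.log (2 ^ (3:ℕ)) := Real.log_le_log (by norm_num) (by norm_num)
        rwa [Real.log_pow, Nat.cast_ofNat] at this
      nlinarith
    · have hρu6 : u / 6 ≤ ρ := by
        rw [hρ_def, le_div_iff₀ hmn0]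
        nlinarith
      have hu6 : 1 ≤ u / 6 := by linarith
      have lM : Real.log (1 + u / 6) ≤ M := Real.log_le_log (by linarith) (by linarith)
      have lM2 : Real.log 2 ≤ Real.log (1 + u / 6) := Real.log_le_log (by norm_num) (by linarith)
      have n1 : N ≤ Real.log (6 * (1 + u / 6)) := Real.log_le_log (by linarith) (by linarith)
      rw [Real.log_mul (by norm_num) (by linarith)] at n1
      have n2 : Real.log 6 ≤ 3 * Real.log 2 := by
        have : Real.log 6 ≤ Real.log (2 ^ (3:ℕ)) := Real.log_le_log (by norm_num) (by norm_num)
        rwa [Real.log_pow, Nat.cast_ofNat] at this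
      nlinarith
  -- M^δ ≤ 6^|δ| * N^δ
  have hMδ : M ^ δ ≤ 6 ^ |δ| * N ^ δ := by
    rcases le_or_gt 0 δ with hδ | hδ
    · rw [abs_of_nonneg hδ]
      calc M ^ δ ≤ (6 * N) ^ δ := Real.rpow_le_rpow hM0.le hM6N hδ
        _ = 6 ^ δ * N ^ δ := Real.mul_rpow (by norm_num) hN0.le
    · rw [abs_of_neg hδ]
      have hd6 : N / 6 ≤ M := by linarith
      calc M ^ δ ≤ (N / 6) ^ δ := Real.rpow_le_rpow_of_nonpos (by positivity) hd6 hδ.le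
        _ = N ^ δ / 6 ^ δ := Real.div_rpow hN0.le (by norm_num) δ
        _ = 6 ^ (-δ) * N ^ δ := by rw [Real.rpow_neg (by norm_num)]; ring
  -- N^δ ≤ Bconst * s^ε * t^(-ε)
  have hNδ : N ^ δ ≤ Bconst δ ε * (s ^ ε * t ^ (-ε)) := by
    have h1 := logpow_le (δ := δ) hε hu
    have huε : u ^ ε = s ^ ε * t ^ (-ε) := by
      rw [hu_def, Real.div_rpow hs.le ht.le, Real.rpow_neg ht.le, div_eq_mul_inv]
    rw [hN_def]; rw [huε] at h1; linarith [h1]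
  -- r^e ≤ 6^(-e) * s^e
  have hre : r ^ e ≤ 6 ^ (-e) * s ^ e := by
    calc r ^ e ≤ (s / 6) ^ e := Real.rpow_le_rpow_of_nonpos (by positivity) hs6 he
      _ = s ^ e / 6 ^ e := Real.div_rpow hs.le (by norm_num) e
      _ = 6 ^ (-e) * s ^ e := by rw [Real.rpow_neg (by norm_num)]; ring
  -- assemble
  have hBpos := Bconst_pos (δ := δ) hε
  have hmax : max xd t = t := max_eq_right hxdt.le
  have hRt : 0 < 2 * R / t := by positivity
  have hL0 : 0 ≤ Real.log (1 + 2 * R / t) := Real.log_nonneg (by linarith)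
  have hLβ : 0 ≤ Real.log (1 + 2 * R / t) ^ β := Real.rpow_nonneg hL0 β
  have htγ : 0 ≤ t ^ γ := Real.rpow_nonneg ht.le γ
  have hMδ2 : M ^ δ ≤ 6 ^ |δ| * (Bconst δ ε * (s ^ ε * t ^ (-ε))) := by
    calc M ^ δ ≤ 6 ^ |δ| * N ^ δ := hMδ
      _ ≤ 6 ^ |δ| * (Bconst δ ε * (s ^ ε * t ^ (-ε))) := by
        apply mul_le_mul_of_nonneg_left hNδ (Real.rpow_nonneg (by norm_num) _)
  have A2 : t ^ γ * r ^ e * Real.log (1 + 2 * R / t) ^ β ≤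
      t ^ γ * (6 ^ (-e) * s ^ e) * Real.log (1 + 2 * R / t) ^ β :=
    mul_le_mul_of_nonneg_right (mul_le_mul_of_nonneg_left hre htγ) hLβ
  have A3 : t ^ γ * r ^ e * Real.log (1 + 2 * R / t) ^ β * M ^ δ ≤
      t ^ γ * (6 ^ (-e) * s ^ e) * Real.log (1 + 2 * R / t) ^ β *
        (6 ^ |δ| * (Bconst δ ε * (s ^ ε * t ^ (-ε)))) := by
    refine mul_le_mul A2 hMδ2 (Real.rpow_nonneg hM0.le δ) ?_
    have h6e : (0:ℝ) ≤ 6 ^ (-e) := Real.rpow_nonneg (by norm_num) _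
    have hse : (0:ℝ) ≤ s ^ e := Real.rpow_nonneg hs.le _
    positivity
  simp only [ff, nrm_eq]
  rw [← hr_def, hmax, ← hmn_def, ← hρ_def, ← hM_def, ← he_def]
  calc t ^ γ * r ^ e * Real.log (1 + 2 * R / t) ^ β * M ^ δ ≤ _ := A3
    _ = (6:ℝ) ^ (-e) * 6 ^ |δ| * Bconst δ ε *
        (t ^ (γ - ε) * Real.log (1 + 2 * R / t) ^ β * s ^ (e + ε)) := by
      rw [Real.rpow_add hs e ε, show γ - ε = γ + (-ε) from by ring, Real.rpow_add ht γ (-ε)]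
      ring

set_option maxHeartbeats 1000000 in
private lemma ff_lower (d : ℕ) {α γ q δ β R xd t : ℝ}
    (hβ : 0 ≤ β) (he : -(d:ℝ) + α - q ≤ 0)
    (hxd : 0 < xd) (hxt : 3 * xd ≤ 2 * t) (hR : 0 < R)
    (z : EuclideanSpace ℝ (Fin (d - 1))) (hz : ‖z‖ < t) :
    ((2:ℝ) ^ (-(d:ℝ) + α - q) * Aconst δ) *
        (t ^ (γ + (-(d:ℝ) + α - q)) * Real.log (1 + 2 * R / t) ^ β) ≤
      ff d α R γ β q δ ((0 : EuclideanSpace ℝ (Fin (d - 1))), xd) (z, t) := by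
  set e : ℝ := -(d:ℝ) + α - q with he_def
  have ht : 0 < t := by linarith
  have hz0 : 0 ≤ ‖z‖ := norm_nonneg z
  set r : ℝ := Real.sqrt (‖z‖ ^ 2 + (xd - t) ^ 2) with hr_def
  have hxdt : xd < t := by linarith
  have htr : t / 3 ≤ r := by
    have h := Real.sqrt_le_sqrt (show (t / 3) ^ 2 ≤ ‖z‖ ^ 2 + (xd - t) ^ 2 by nlinarith)
    rwa [Real.sqrt_sq (by linarith)] at h
  have hr0 : 0 < r := lt_of_lt_of_le (by linarith) htr
  have hr2t : r ≤ 2 * t := by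
    have h := Real.sqrt_le_sqrt (show ‖z‖ ^ 2 + (xd - t) ^ 2 ≤ (2 * t) ^ 2 by nlinarith)
    rwa [Real.sqrt_sq (by linarith)] at h
  set mn : ℝ := min t r with hmn_def
  have hmn_lb : t / 3 ≤ mn := le_min (by linarith) htr
  have hmn0 : 0 < mn := lt_of_lt_of_le (by linarith) hmn_lb
  have hmnr : mn ≤ r := min_le_right _ _
  set ρ : ℝ := r / mn with hρ_def
  have h1ρ : 1 ≤ ρ := (one_le_div hmn0).2 hmnr
  have hρ6 : ρ ≤ 6 := by
    rw [hρ_def, div_le_iff₀ hmn0]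
    nlinarith
  set M : ℝ := Real.log (1 + ρ) with hM_def
  have h2 := two_log_pos
  have hM2 : Real.log 2 ≤ M := Real.log_le_log (by norm_num) (by linarith)
  have hM0 : 0 < M := lt_of_lt_of_le h2 hM2
  have hM7 : M ≤ Real.log 7 := Real.log_le_log (by linarith) (by linarith)
  have hAδ : Aconst δ ≤ M ^ δ := by
    rcases le_or_gt 0 δ with hδ | hδ
    · exact (min_le_left _ _).trans (Real.rpow_le_rpow h2.le hM2 hδ)
    · exact (min_le_right _ _).trans (Real.rpow_le_rpow_of_nonpos hM0 hM7 hδ.le)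
  have hRt : 0 < 2 * R / t := by positivity
  have hL0 : 0 ≤ Real.log (1 + 2 * R / t) := Real.log_nonneg (by linarith)
  have hLβ : 0 ≤ Real.log (1 + 2 * R / t) ^ β := Real.rpow_nonneg hL0 β
  have htγ : 0 ≤ t ^ γ := Real.rpow_nonneg ht.le γ
  have h2te : (2:ℝ) ^ e * t ^ e ≤ r ^ e := by
    have h := Real.rpow_le_rpow_of_nonpos hr0 hr2t he
    rwa [Real.mul_rpow (by norm_num) ht.le] at h
  have A2 : t ^ γ * ((2:ℝ) ^ e * t ^ e) * Real.log (1 + 2 * R / t) ^ β ≤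
      t ^ γ * r ^ e * Real.log (1 + 2 * R / t) ^ β :=
    mul_le_mul_of_nonneg_right (mul_le_mul_of_nonneg_left h2te htγ) hLβ
  have A3 : t ^ γ * ((2:ℝ) ^ e * t ^ e) * Real.log (1 + 2 * R / t) ^ β * Aconst δ ≤
      t ^ γ * r ^ e * Real.log (1 + 2 * R / t) ^ β * M ^ δ := by
    refine mul_le_mul A2 hAδ (Aconst_pos δ).le ?_
    have hre : (0:ℝ) ≤ r ^ e := Real.rpow_nonneg hr0.le _
    positivity
  have hmax : max xd t = t := max_eq_right hxdt.le
  simp only [ff, nrm_eq]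
  rw [← hr_def, hmax, ← hmn_def, ← hρ_def, ← hM_def, ← he_def]
  calc (2:ℝ) ^ e * Aconst δ * (t ^ (γ + e) * Real.log (1 + 2 * R / t) ^ β)
      = t ^ γ * ((2:ℝ) ^ e * t ^ e) * Real.log (1 + 2 * R / t) ^ β * Aconst δ := by
        rw [Real.rpow_add ht γ e]; ring
    _ ≤ _ := A3

set_option maxHeartbeats 1000000 in
private lemma slice_upper (d : ℕ) (hd : 2 ≤ d) {α γ q δ β R xd t : ℝ}
    (hβ : 0 ≤ β) (hα2 : α < 2) (hq : α - 1 < q)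
    (hxd : 0 < xd) (hxt : 3 * xd ≤ 2 * t) (hR : 0 < R) :
    (∫⁻ z in Metric.ball (0 : EuclideanSpace ℝ (Fin (d - 1))) R,
        ENNReal.ofReal (ff d α R γ β q δ ((0 : EuclideanSpace ℝ (Fin (d - 1))), xd) (z, t)))
      ≤ ENNReal.ofReal (((6:ℝ) ^ (-(-(d:ℝ) + α - q)) * 6 ^ |δ| * Bconst δ ((1 + q - α) / 2) *
          ∫ w : EuclideanSpace ℝ (Fin (d - 1)), (1 + ‖w‖) ^ (-(d:ℝ) + α - q + (1 + q - α) / 2)) *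
          (t ^ (γ + α - q - 1) * Real.log (1 + 2 * R / t) ^ β)) := by
  have ht : 0 < t := by linarith
  have hd2 : (2:ℝ) ≤ (d:ℝ) := by exact_mod_cast hd
  have he : -(d:ℝ) + α - q ≤ 0 := by linarith
  set e : ℝ := -(d:ℝ) + α - q with he_def
  set ε : ℝ := (1 + q - α) / 2 with hε_def
  have hε : 0 < ε := by rw [hε_def]; linarith
  set p : ℝ := e + ε with hp_def
  have hfin : (finrank ℝ (EuclideanSpace ℝ (Fin (d - 1))) : ℝ) = (d:ℝ) - 1 := by
    rw [finrank_euclideanSpace_fin]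
    push_cast [Nat.cast_sub (show 1 ≤ d by omega)]
    ring
  have hpint : (finrank ℝ (EuclideanSpace ℝ (Fin (d - 1))) : ℝ) < -p := by
    rw [hfin, hp_def, he_def, hε_def]; linarith
  have hJint : Integrable (fun w : EuclideanSpace ℝ (Fin (d - 1)) => (1 + ‖w‖) ^ p) volume := by
    have := integrable_one_add_norm (E := EuclideanSpace ℝ (Fin (d - 1))) (μ := volume) hpint
    simpa using this
  set J : ℝ := ∫ w : EuclideanSpace ℝ (Fin (d - 1)), (1 + ‖w‖) ^ p with hJ_def
  have hJ0 : 0 ≤ J :=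
    integral_nonneg fun w => Real.rpow_nonneg (by positivity) _
  have hgeq : ∀ z : EuclideanSpace ℝ (Fin (d - 1)),
      t ^ p * (1 + ‖t⁻¹ • z‖) ^ p = (‖z‖ + t) ^ p := by
    intro z
    have h1 : (1 + ‖t⁻¹ • z‖) = (‖z‖ + t) / t := by
      rw [norm_smul, Real.norm_eq_abs, abs_of_pos (inv_pos.2 ht)]
      field_simp
      ring
    rw [h1, Real.div_rpow (by positivity) ht.le]
    field_simp
  have hgint : Integrable (fun z : EuclideanSpace ℝ (Fin (d - 1)) => (‖z‖ + t) ^ p) volume := by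
    have h1 : Integrable (fun z : EuclideanSpace ℝ (Fin (d - 1)) =>
        t ^ p * (1 + ‖t⁻¹ • z‖) ^ p) volume :=
      (hJint.comp_smul (inv_ne_zero (ne_of_gt ht))).const_mul _
    exact h1.congr (Filter.Eventually.of_forall hgeq)
  have hscale : (∫ z : EuclideanSpace ℝ (Fin (d - 1)), (‖z‖ + t) ^ p) =
      t ^ (d - 1 : ℕ) * (t ^ p * J) := by
    have h0 := Measure.integral_comp_smul (μ := volume)
      (fun z : EuclideanSpace ℝ (Fin (d - 1)) => (‖z‖ + t) ^ p) t
    have h1 : (∫ x : EuclideanSpace ℝ (Fin (d - 1)), (‖t • x‖ + t) ^ p) = t ^ p * J := by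
      have heq : ∀ x : EuclideanSpace ℝ (Fin (d - 1)),
          (‖t • x‖ + t) ^ p = t ^ p * (1 + ‖x‖) ^ p := fun x => by
        rw [show ‖t • x‖ + t = t * (1 + ‖x‖) by
              rw [norm_smul, Real.norm_eq_abs, abs_of_pos ht]; ring,
          Real.mul_rpow ht.le (by positivity)]
      simp_rw [heq]
      rw [integral_const_mul]
    rw [h1, finrank_euclideanSpace_fin, smul_eq_mul] at h0
    have hpow : (0:ℝ) < t ^ (d - 1 : ℕ) := by positivity
    rw [abs_of_pos (by positivity)] at h0
    field_simp at h0
    linarith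
  -- the majorant chain
  set L : ℝ := Real.log (1 + 2 * R / t) with hL_def
  have hRt : 0 < 2 * R / t := by positivity
  have hL0 : 0 ≤ L := Real.log_nonneg (by linarith)
  have hLβ : 0 ≤ L ^ β := Real.rpow_nonneg hL0 β
  have hB := Bconst_pos (δ := δ) hε
  have hCp0 : (0:ℝ) ≤ (6:ℝ) ^ (-e) * 6 ^ |δ| * Bconst δ ε :=
    mul_nonneg (mul_nonneg (Real.rpow_nonneg (by norm_num) _)
      (Real.rpow_nonneg (by norm_num) _)) hB.le
  have hmaj : ∀ z : EuclideanSpace ℝ (Fin (d - 1)),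
      ff d α R γ β q δ ((0 : EuclideanSpace ℝ (Fin (d - 1))), xd) (z, t) ≤
        (((6:ℝ) ^ (-e) * 6 ^ |δ| * Bconst δ ε) * (t ^ (γ - ε) * L ^ β)) * (‖z‖ + t) ^ p := by
    intro z
    have h := ff_upper d hd hβ hε he hxd hxt hR z (γ := γ) (δ := δ)
    calc ff d α R γ β q δ ((0 : EuclideanSpace ℝ (Fin (d - 1))), xd) (z, t) ≤ _ := h
      _ = (((6:ℝ) ^ (-e) * 6 ^ |δ| * Bconst δ ε) * (t ^ (γ - ε) * L ^ β)) * (‖z‖ + t) ^ p := by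
        rw [hL_def, hp_def, he_def]; ring
  have hmaj_int : Integrable (fun z : EuclideanSpace ℝ (Fin (d - 1)) =>
      (((6:ℝ) ^ (-e) * 6 ^ |δ| * Bconst δ ε) * (t ^ (γ - ε) * L ^ β)) * (‖z‖ + t) ^ p) volume :=
    hgint.const_mul _
  have hmaj_nn : 0 ≤ᵐ[volume] (fun z : EuclideanSpace ℝ (Fin (d - 1)) =>
      (((6:ℝ) ^ (-e) * 6 ^ |δ| * Bconst δ ε) * (t ^ (γ - ε) * L ^ β)) * (‖z‖ + t) ^ p) := by
    refine Filter.Eventually.of_forall fun z => ?_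
    have h1 : (0:ℝ) ≤ t ^ (γ - ε) := Real.rpow_nonneg ht.le _
    have h2 : (0:ℝ) ≤ (‖z‖ + t) ^ p := Real.rpow_nonneg (by positivity) _
    exact mul_nonneg (mul_nonneg hCp0 (mul_nonneg h1 hLβ)) h2
  calc (∫⁻ z in Metric.ball (0 : EuclideanSpace ℝ (Fin (d - 1))) R,
        ENNReal.ofReal (ff d α R γ β q δ ((0 : EuclideanSpace ℝ (Fin (d - 1))), xd) (z, t)))
      ≤ ∫⁻ z in Metric.ball (0 : EuclideanSpace ℝ (Fin (d - 1))) R,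
          ENNReal.ofReal ((((6:ℝ) ^ (-e) * 6 ^ |δ| * Bconst δ ε) * (t ^ (γ - ε) * L ^ β)) *
            (‖z‖ + t) ^ p) :=
        lintegral_mono fun z => ENNReal.ofReal_le_ofReal (hmaj z)
    _ ≤ ∫⁻ z, ENNReal.ofReal ((((6:ℝ) ^ (-e) * 6 ^ |δ| * Bconst δ ε) * (t ^ (γ - ε) * L ^ β)) *
            (‖z‖ + t) ^ p) := setLIntegral_le_lintegral _ _
    _ = ENNReal.ofReal (∫ z : EuclideanSpace ℝ (Fin (d - 1)),
          (((6:ℝ) ^ (-e) * 6 ^ |δ| * Bconst δ ε) * (t ^ (γ - ε) * L ^ β)) * (‖z‖ + t) ^ p) :=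
        (ofReal_integral_eq_lintegral_ofReal hmaj_int hmaj_nn).symm
    _ = ENNReal.ofReal ((((6:ℝ) ^ (-e)) * 6 ^ |δ| * Bconst δ ε * J) * (t ^ (γ + α - q - 1) * L ^ β)) := by
        congr 1
        rw [integral_const_mul, hscale]
        have hexp : t ^ (γ - ε) * ((t:ℝ) ^ (d - 1 : ℕ) * t ^ p) = t ^ (γ + α - q - 1) := by
          rw [← Real.rpow_natCast t (d - 1), ← Real.rpow_add ht, ← Real.rpow_add ht]
          congr 1
          have hc : ((d - 1 : ℕ) : ℝ) = (d:ℝ) - 1 := by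
            push_cast [Nat.cast_sub (show 1 ≤ d by omega)]; ring
          rw [hc, hp_def, he_def, hε_def]; ring
        linear_combination ((6:ℝ) ^ (-e) * 6 ^ |δ| * Bconst δ ε * L ^ β * J) * hexp
  done

set_option maxHeartbeats 1000000 in
private lemma slice_lower (d : ℕ) (hd : 2 ≤ d) {α γ q δ β R xd t : ℝ}
    (hβ : 0 ≤ β) (he : -(d:ℝ) + α - q ≤ 0)
    (hxd : 0 < xd) (hxt : 3 * xd ≤ 2 * t) (hR : 0 < R) (htR : t ≤ R) :
    ENNReal.ofReal (((2:ℝ) ^ (-(d:ℝ) + α - q) * Aconst δ *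
        (volume (Metric.ball (0 : EuclideanSpace ℝ (Fin (d - 1))) 1)).toReal) *
        (t ^ (γ + α - q - 1) * Real.log (1 + 2 * R / t) ^ β))
      ≤ ∫⁻ z in Metric.ball (0 : EuclideanSpace ℝ (Fin (d - 1))) R,
          ENNReal.ofReal (ff d α R γ β q δ ((0 : EuclideanSpace ℝ (Fin (d - 1))), xd) (z, t)) := by
  have ht : 0 < t := by linarith
  haveI : Nonempty (Fin (d - 1)) := ⟨⟨0, by omega⟩⟩
  haveI : Nontrivial (EuclideanSpace ℝ (Fin (d - 1))) :=
    inferInstance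
  set e : ℝ := -(d:ℝ) + α - q with he_def
  set L : ℝ := Real.log (1 + 2 * R / t) with hL_def
  have hRt : 0 < 2 * R / t := by positivity
  have hL0 : 0 ≤ L := Real.log_nonneg (by linarith)
  have hLβ : 0 ≤ L ^ β := Real.rpow_nonneg hL0 β
  set v₁ : ℝ := (volume (Metric.ball (0 : EuclideanSpace ℝ (Fin (d - 1))) 1)).toReal with hv₁_def
  have hv₁0 : 0 ≤ v₁ := ENNReal.toReal_nonneg
  have hlow0 : 0 ≤ (2:ℝ) ^ e * Aconst δ * (t ^ (γ + e) * L ^ β) := by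
    have h1 : (0:ℝ) ≤ (2:ℝ) ^ e := Real.rpow_nonneg (by norm_num) _
    have h2 : (0:ℝ) ≤ t ^ (γ + e) := Real.rpow_nonneg ht.le _
    have h3 := (Aconst_pos δ).le
    positivity
  have hvol : volume (Metric.ball (0 : EuclideanSpace ℝ (Fin (d - 1))) t) =
      ENNReal.ofReal (t ^ (d - 1 : ℕ)) * volume (Metric.ball (0 : EuclideanSpace ℝ (Fin (d - 1))) 1) := by
    rw [Measure.addHaar_ball volume _ ht.le, finrank_euclideanSpace_fin]
  have hexp2 : t ^ (γ + e) * (t:ℝ) ^ (d - 1 : ℕ) = t ^ (γ + α - q - 1) := by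
    rw [← Real.rpow_natCast t (d - 1), ← Real.rpow_add ht]
    congr 1
    have hc : ((d - 1 : ℕ) : ℝ) = (d:ℝ) - 1 := by
      push_cast [Nat.cast_sub (show 1 ≤ d by omega)]; ring
    rw [hc, he_def]; ring
  calc ENNReal.ofReal (((2:ℝ) ^ e * Aconst δ * v₁) * (t ^ (γ + α - q - 1) * L ^ β))
      = ENNReal.ofReal (((2:ℝ) ^ e * Aconst δ * (t ^ (γ + e) * L ^ β)) * (t ^ (d - 1 : ℕ) * v₁)) := by
        congr 1
        linear_combination ((2:ℝ) ^ e * Aconst δ * L ^ β * v₁) * hexp2.symm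
    _ = ENNReal.ofReal ((2:ℝ) ^ e * Aconst δ * (t ^ (γ + e) * L ^ β)) *
          (ENNReal.ofReal (t ^ (d - 1 : ℕ)) * ENNReal.ofReal v₁) := by
        have split1 : ENNReal.ofReal (((2:ℝ) ^ e * Aconst δ * (t ^ (γ + e) * L ^ β)) *
            (t ^ (d - 1 : ℕ) * v₁)) = ENNReal.ofReal ((2:ℝ) ^ e * Aconst δ * (t ^ (γ + e) * L ^ β)) *
            ENNReal.ofReal (t ^ (d - 1 : ℕ) * v₁) := ENNReal.ofReal_mul hlow0
        have split2 : ENNReal.ofReal ((t:ℝ) ^ (d - 1 : ℕ) * v₁) =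
            ENNReal.ofReal ((t:ℝ) ^ (d - 1 : ℕ)) * ENNReal.ofReal v₁ :=
          ENNReal.ofReal_mul (by positivity)
        rw [split1, split2]
    _ = ENNReal.ofReal ((2:ℝ) ^ e * Aconst δ * (t ^ (γ + e) * L ^ β)) *
          volume (Metric.ball (0 : EuclideanSpace ℝ (Fin (d - 1))) t) := by
        rw [hvol, hv₁_def, ENNReal.ofReal_toReal measure_ball_lt_top.ne]
    _ = ∫⁻ _z in Metric.ball (0 : EuclideanSpace ℝ (Fin (d - 1))) t,
          ENNReal.ofReal ((2:ℝ) ^ e * Aconst δ * (t ^ (γ + e) * L ^ β)) :=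
        (setLIntegral_const _ _).symm
    _ ≤ ∫⁻ z in Metric.ball (0 : EuclideanSpace ℝ (Fin (d - 1))) t,
          ENNReal.ofReal (ff d α R γ β q δ ((0 : EuclideanSpace ℝ (Fin (d - 1))), xd) (z, t)) := by
        refine setLIntegral_mono' measurableSet_ball fun z hz => ?_
        refine ENNReal.ofReal_le_ofReal ?_
        have hzt : ‖z‖ < t := by simpa [mem_ball_zero_iff] using hz
        have h := ff_lower d hβ he hxd hxt hR z hzt (γ := γ) (δ := δ)
        calc (2:ℝ) ^ e * Aconst δ * (t ^ (γ + e) * L ^ β)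
            = (2:ℝ) ^ e * Aconst δ * (t ^ (γ + e) * L ^ β) := rfl
          _ ≤ _ := h
    _ ≤ _ := lintegral_mono' (Measure.restrict_mono (Metric.ball_subset_ball htR) le_rfl) le_rfl

private lemma cont_g (γ' β : ℝ) (hβ : 0 ≤ β) :
    ContinuousOn (fun h : ℝ => h ^ γ' * Real.log (2 / h) ^ β) (Set.Ioi 0) := by
  apply ContinuousOn.mul
  · exact continuousOn_id.rpow_const fun x hx => Or.inl (ne_of_gt hx)
  · apply ContinuousOn.rpow_const
    · apply ContinuousOn.log
      · exact continuousOn_const.div continuousOn_id fun x hx => ne_of_gt hx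
      · intro x hx
        exact ne_of_gt (div_pos two_pos hx)
    · intro x hx; exact Or.inr hβ

private lemma cont_phi (γ' β R : ℝ) (hβ : 0 ≤ β) (hR : 0 < R) :
    ContinuousOn (fun t : ℝ => t ^ γ' * Real.log (1 + 2 * R / t) ^ β) (Set.Ioi 0) := by
  apply ContinuousOn.mul
  · exact continuousOn_id.rpow_const fun x hx => Or.inl (ne_of_gt hx)
  · apply ContinuousOn.rpow_const
    · apply ContinuousOn.log
      · exact continuousOn_const.add (continuousOn_const.div continuousOn_id
          fun x hx => ne_of_gt hx)
      · intro x hx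
        have : 0 < 2 * R / x := div_pos (by linarith) hx
        positivity
    · intro x hx; exact Or.inr hβ

private lemma cont_psi (γ' β R : ℝ) (hβ : 0 ≤ β) (hR : 0 < R) :
    ContinuousOn (fun t : ℝ => t ^ γ' * Real.log (2 * R / t) ^ β) (Set.Ioi 0) := by
  apply ContinuousOn.mul
  · exact continuousOn_id.rpow_const fun x hx => Or.inl (ne_of_gt hx)
  · apply ContinuousOn.rpow_const
    · apply ContinuousOn.log
      · exact continuousOn_const.div continuousOn_id fun x hx => ne_of_gt hx
      · intro x hx
        exact ne_of_gt (div_pos (by linarith) hx)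
    · intro x hx; exact Or.inr hβ

private lemma Fdiff_eq (γ' β : ℝ) (hβ : 0 ≤ β) {R a₃ a₂ : ℝ} (hR : 0 < R)
    (h3 : 0 < a₃) (h32 : a₃ ≤ a₂) (h2R : a₂ ≤ R) :
    Ff γ' β (a₃ / R) - Ff γ' β (a₂ / R) =
      ∫ h in (a₃ / R)..(a₂ / R), h ^ γ' * Real.log (2 / h) ^ β := by
  have hdiv : a₃ / R ≤ a₂ / R := by gcongr
  have hsub1 : Set.uIcc (a₃ / R) (a₂ / R) ⊆ Set.Ioi (0:ℝ) := by
    rw [Set.uIcc_of_le hdiv]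
    intro x hx
    exact lt_of_lt_of_le (by positivity) hx.1
  have hsub2 : Set.uIcc (a₂ / R) 1 ⊆ Set.Ioi (0:ℝ) := by
    intro x hx
    have h2pos : 0 < a₂ := lt_of_lt_of_le h3 h32
    exact lt_of_lt_of_le (lt_min (div_pos h2pos hR) one_pos) hx.1
  have i1 : IntervalIntegrable (fun h : ℝ => h ^ γ' * Real.log (2 / h) ^ β) volume
      (a₃ / R) (a₂ / R) := (((cont_g γ' β hβ).mono hsub1)).intervalIntegrable
  have i2 : IntervalIntegrable (fun h : ℝ => h ^ γ' * Real.log (2 / h) ^ β) volume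
      (a₂ / R) 1 := (((cont_g γ' β hβ).mono hsub2)).intervalIntegrable
  have key := intervalIntegral.integral_add_adjacent_intervals i1 i2
  unfold Ff
  linarith [key]

private lemma Fdiff_nonneg (γ' β : ℝ) (hβ : 0 ≤ β) {R a₃ a₂ : ℝ} (hR : 0 < R)
    (h3 : 0 < a₃) (h32 : a₃ ≤ a₂) (h2R : a₂ ≤ R) :
    0 ≤ Ff γ' β (a₃ / R) - Ff γ' β (a₂ / R) := by
  rw [Fdiff_eq γ' β hβ hR h3 h32 h2R]
  apply intervalIntegral.integral_nonneg (by gcongr)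
  intro u hu
  have hu0 : 0 < u := lt_of_lt_of_le (by positivity) hu.1
  have hu1 : u ≤ 1 := le_trans hu.2 (by rw [div_le_one hR]; linarith)
  have hlog : 0 ≤ Real.log (2 / u) := Real.log_nonneg (by rw [le_div_iff₀ hu0]; linarith)
  exact mul_nonneg (Real.rpow_nonneg hu0.le _) (Real.rpow_nonneg hlog _)

private lemma psi_eq (γ' β : ℝ) (hβ : 0 ≤ β) {R a₃ a₂ : ℝ} (hR : 0 < R)
    (h3 : 0 < a₃) (h32 : a₃ ≤ a₂) (h2R : a₂ ≤ R) :
    (∫ t in a₃..a₂, t ^ γ' * Real.log (2 * R / t) ^ β) =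
      R ^ (γ' + 1) * ∫ h in (a₃ / R)..(a₂ / R), h ^ γ' * Real.log (2 / h) ^ β := by
  have hR0 : R ≠ 0 := ne_of_gt hR
  have key := intervalIntegral.integral_comp_div (a := a₃) (b := a₂) (c := R)
      (f := fun h => h ^ γ' * Real.log (2 / h) ^ β) hR0
  have congr1 : (∫ t in a₃..a₂, t ^ γ' * Real.log (2 * R / t) ^ β)
      = ∫ t in a₃..a₂, R ^ γ' * ((t / R) ^ γ' * Real.log (2 / (t / R)) ^ β) := by
    apply intervalIntegral.integral_congr
    intro t htm
    rw [Set.uIcc_of_le h32] at htm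
    have ht0 : 0 < t := lt_of_lt_of_le h3 htm.1
    have h1 : 2 / (t / R) = 2 * R / t := div_div_eq_mul_div 2 t R
    have h2 : (t / R) ^ γ' = t ^ γ' / R ^ γ' := Real.div_rpow ht0.le hR.le γ'
    have hRγ : (0:ℝ) < R ^ γ' := Real.rpow_pos_of_pos hR γ'
    show t ^ γ' * Real.log (2 * R / t) ^ β = R ^ γ' * ((t / R) ^ γ' * Real.log (2 / (t / R)) ^ β)
    rw [h1, h2]
    field_simp
  rw [congr1, intervalIntegral.integral_const_mul, key, smul_eq_mul, Real.rpow_add hR,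
    Real.rpow_one]
  ring

private lemma oneD_lower (γ' β : ℝ) (hβ : 0 ≤ β) {R a₃ a₂ : ℝ} (hR : 0 < R)
    (h3 : 0 < a₃) (h32 : a₃ ≤ a₂) (h2R : a₂ ≤ R) :
    ENNReal.ofReal (R ^ (γ' + 1) * (Ff γ' β (a₃ / R) - Ff γ' β (a₂ / R))) ≤
      ∫⁻ t in Set.Ico a₃ a₂, ENNReal.ofReal (t ^ γ' * Real.log (1 + 2 * R / t) ^ β) := by
  have hsub : Set.uIcc a₃ a₂ ⊆ Set.Ioi (0:ℝ) := by
    rw [Set.uIcc_of_le h32]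
    intro x hx
    exact lt_of_lt_of_le h3 hx.1
  have iψ : IntegrableOn (fun t : ℝ => t ^ γ' * Real.log (2 * R / t) ^ β)
      (Set.Ioc a₃ a₂) volume := (intervalIntegrable_iff_integrableOn_Ioc_of_le h32).1
    ((cont_psi γ' β R hβ hR).mono hsub).intervalIntegrable
  have iφ : IntegrableOn (fun t : ℝ => t ^ γ' * Real.log (1 + 2 * R / t) ^ β)
      (Set.Ioc a₃ a₂) volume := (intervalIntegrable_iff_integrableOn_Ioc_of_le h32).1
    ((cont_phi γ' β R hβ hR).mono hsub).intervalIntegrable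
  have hcomp : ∀ t ∈ Set.Ioc a₃ a₂,
      t ^ γ' * Real.log (2 * R / t) ^ β ≤ t ^ γ' * Real.log (1 + 2 * R / t) ^ β := by
    intro t ht
    have ht0 : 0 < t := lt_trans h3 ht.1
    have hw : 2 ≤ 2 * R / t := by rw [le_div_iff₀ ht0]; nlinarith [ht.2]
    have hw0 : 0 < 2 * R / t := by linarith
    have hlog0 : 0 ≤ Real.log (2 * R / t) := Real.log_nonneg (by linarith)
    have hle : Real.log (2 * R / t) ≤ Real.log (1 + 2 * R / t) :=
      Real.log_le_log hw0 (by linarith)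
    exact mul_le_mul_of_nonneg_left (Real.rpow_le_rpow hlog0 hle hβ)
      (Real.rpow_nonneg ht0.le γ')
  have hφnn : 0 ≤ᵐ[volume.restrict (Set.Ioc a₃ a₂)]
      fun t : ℝ => t ^ γ' * Real.log (1 + 2 * R / t) ^ β := by
    refine (ae_restrict_iff' measurableSet_Ioc).2 (Filter.Eventually.of_forall fun t ht => ?_)
    have ht0 : 0 < t := lt_trans h3 ht.1
    have : 0 < 2 * R / t := by positivity
    have hlog0 : 0 ≤ Real.log (1 + 2 * R / t) := Real.log_nonneg (by linarith)
    exact mul_nonneg (Real.rpow_nonneg ht0.le _) (Real.rpow_nonneg hlog0 _)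
  calc ENNReal.ofReal (R ^ (γ' + 1) * (Ff γ' β (a₃ / R) - Ff γ' β (a₂ / R)))
      = ENNReal.ofReal (∫ t in Set.Ioc a₃ a₂, t ^ γ' * Real.log (2 * R / t) ^ β) := by
        rw [Fdiff_eq γ' β hβ hR h3 h32 h2R, ← psi_eq γ' β hβ hR h3 h32 h2R,
          intervalIntegral.integral_of_le h32]
    _ ≤ ENNReal.ofReal (∫ t in Set.Ioc a₃ a₂, t ^ γ' * Real.log (1 + 2 * R / t) ^ β) :=
        ENNReal.ofReal_le_ofReal (setIntegral_mono_on iψ iφ measurableSet_Ioc hcomp)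
    _ = ∫⁻ t in Set.Ioc a₃ a₂, ENNReal.ofReal (t ^ γ' * Real.log (1 + 2 * R / t) ^ β) :=
        ofReal_integral_eq_lintegral_ofReal iφ hφnn
    _ = ∫⁻ t in Set.Ico a₃ a₂, ENNReal.ofReal (t ^ γ' * Real.log (1 + 2 * R / t) ^ β) :=
        (setLIntegral_congr Ico_ae_eq_Ioc).symm

private lemma oneD_upper (γ' β : ℝ) (hβ : 0 ≤ β) {R a₃ a₂ : ℝ} (hR : 0 < R)
    (h3 : 0 < a₃) (h32 : a₃ ≤ a₂) (h2R : a₂ ≤ R) :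
    (∫⁻ t in Set.Ico a₃ a₂, ENNReal.ofReal (t ^ γ' * Real.log (1 + 2 * R / t) ^ β)) ≤
      ENNReal.ofReal ((2:ℝ) ^ β *
        (R ^ (γ' + 1) * (Ff γ' β (a₃ / R) - Ff γ' β (a₂ / R)))) := by
  have hsub : Set.uIcc a₃ a₂ ⊆ Set.Ioi (0:ℝ) := by
    rw [Set.uIcc_of_le h32]
    intro x hx
    exact lt_of_lt_of_le h3 hx.1
  have iψ : IntegrableOn (fun t : ℝ => (2:ℝ) ^ β * (t ^ γ' * Real.log (2 * R / t) ^ β))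
      (Set.Ioc a₃ a₂) volume := by
    exact Integrable.const_mul ((intervalIntegrable_iff_integrableOn_Ioc_of_le h32).1
      ((cont_psi γ' β R hβ hR).mono hsub).intervalIntegrable) _
  have iφ : IntegrableOn (fun t : ℝ => t ^ γ' * Real.log (1 + 2 * R / t) ^ β)
      (Set.Ioc a₃ a₂) volume := (intervalIntegrable_iff_integrableOn_Ioc_of_le h32).1
    ((cont_phi γ' β R hβ hR).mono hsub).intervalIntegrable
  have hcomp : ∀ t ∈ Set.Ioc a₃ a₂,
      t ^ γ' * Real.log (1 + 2 * R / t) ^ β ≤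
        (2:ℝ) ^ β * (t ^ γ' * Real.log (2 * R / t) ^ β) := by
    intro t ht
    have ht0 : 0 < t := lt_trans h3 ht.1
    have hw : 2 ≤ 2 * R / t := by rw [le_div_iff₀ ht0]; nlinarith [ht.2]
    have hw0 : 0 < 2 * R / t := by linarith
    have hlog0 : 0 ≤ Real.log (2 * R / t) := Real.log_nonneg (by linarith)
    have hLnn : 0 ≤ Real.log (1 + 2 * R / t) := Real.log_nonneg (by linarith)
    have hsq : 1 + 2 * R / t ≤ (2 * R / t) ^ (2:ℕ) := by nlinarith
    have hlogsq : Real.log ((2 * R / t) ^ (2:ℕ)) = 2 * Real.log (2 * R / t) := by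
      rw [Real.log_pow]; push_cast; ring
    have hle : Real.log (1 + 2 * R / t) ≤ 2 * Real.log (2 * R / t) := by
      rw [← hlogsq]
      exact Real.log_le_log (by linarith) hsq
    have h1 : Real.log (1 + 2 * R / t) ^ β ≤ (2 * Real.log (2 * R / t)) ^ β :=
      Real.rpow_le_rpow hLnn hle hβ
    have h2 : (2 * Real.log (2 * R / t)) ^ β = 2 ^ β * Real.log (2 * R / t) ^ β :=
      Real.mul_rpow (by norm_num) hlog0
    calc t ^ γ' * Real.log (1 + 2 * R / t) ^ β
        ≤ t ^ γ' * (2 ^ β * Real.log (2 * R / t) ^ β) := by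
          rw [← h2]
          exact mul_le_mul_of_nonneg_left h1 (Real.rpow_nonneg ht0.le γ')
      _ = (2:ℝ) ^ β * (t ^ γ' * Real.log (2 * R / t) ^ β) := by ring
  have hψnn : 0 ≤ᵐ[volume.restrict (Set.Ioc a₃ a₂)]
      fun t : ℝ => (2:ℝ) ^ β * (t ^ γ' * Real.log (2 * R / t) ^ β) := by
    refine (ae_restrict_iff' measurableSet_Ioc).2 (Filter.Eventually.of_forall fun t ht => ?_)
    have ht0 : 0 < t := lt_trans h3 ht.1
    have hw : 2 ≤ 2 * R / t := by rw [le_div_iff₀ ht0]; nlinarith [ht.2]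
    have hlog0 : 0 ≤ Real.log (2 * R / t) := Real.log_nonneg (by linarith)
    have h0 : (0:ℝ) ≤ (2:ℝ) ^ β := Real.rpow_nonneg (by norm_num) _
    exact mul_nonneg h0 (mul_nonneg (Real.rpow_nonneg ht0.le _) (Real.rpow_nonneg hlog0 _))
  calc (∫⁻ t in Set.Ico a₃ a₂, ENNReal.ofReal (t ^ γ' * Real.log (1 + 2 * R / t) ^ β))
      = ∫⁻ t in Set.Ioc a₃ a₂, ENNReal.ofReal (t ^ γ' * Real.log (1 + 2 * R / t) ^ β) :=
        setLIntegral_congr Ico_ae_eq_Ioc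
    _ ≤ ∫⁻ t in Set.Ioc a₃ a₂,
          ENNReal.ofReal ((2:ℝ) ^ β * (t ^ γ' * Real.log (2 * R / t) ^ β)) := by
        refine lintegral_mono_ae ((ae_restrict_iff' measurableSet_Ioc).2
          (Filter.Eventually.of_forall fun t ht => ?_))
        exact ENNReal.ofReal_le_ofReal (hcomp t ht)
    _ = ENNReal.ofReal (∫ t in Set.Ioc a₃ a₂,
          (2:ℝ) ^ β * (t ^ γ' * Real.log (2 * R / t) ^ β)) :=
        (ofReal_integral_eq_lintegral_ofReal iψ hψnn).symm
    _ = ENNReal.ofReal ((2:ℝ) ^ β *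
        (R ^ (γ' + 1) * (Ff γ' β (a₃ / R) - Ff γ' β (a₂ / R)))) := by
        congr 1
        rw [integral_const_mul]
        congr 1
        rw [Fdiff_eq γ' β hβ hR h3 h32 h2R, ← psi_eq γ' β hβ hR h3 h32 h2R,
          intervalIntegral.integral_of_le h32]

private lemma mrpow {α : Type*} [MeasurableSpace α] {f : α → ℝ} (hf : Measurable f) (r : ℝ) :
    Measurable fun a => f a ^ r := by fun_prop

private lemma meas_ff (d k : ℕ) (α R γ β q δ xd : ℝ) :
    Measurable fun y : Pt k =>
      ENNReal.ofReal (ff d α R γ β q δ ((0 : EuclideanSpace ℝ (Fin k)), xd) y) := by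
  apply Measurable.ennreal_ofReal
  have cnrm : Continuous (nrm (m := k)) := by
    unfold nrm
    exact Real.continuous_sqrt.comp (((continuous_norm.comp continuous_fst).pow 2).add
      (continuous_snd.pow 2))
  have hnrm : Measurable fun y : Pt k =>
      nrm (((0 : EuclideanSpace ℝ (Fin k)), xd) - y) :=
    (cnrm.comp (continuous_const.sub continuous_id)).measurable
  have hsnd : Measurable fun y : Pt k => y.2 := measurable_snd
  unfold ff
  exact ((((mrpow hsnd γ).mul (mrpow hnrm _)).mul
      (mrpow ((Measurable.const_add (measurable_const.div hsnd) 1).log) β)).mul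
    (mrpow ((Measurable.const_add
      (hnrm.div ((measurable_const.max hsnd).min hnrm)) 1).log) δ))

set_option maxHeartbeats 2000000 in
theorem stmt_1 (d : ℕ) (hd : 2 ≤ d) (α γ q δ β : ℝ)
    (hα0 : 0 < α) (hα2 : α < 2) (hq : α - 1 < q) (hβ : 0 ≤ β) :
    ∃ c C : ℝ, 0 < c ∧ c ≤ C ∧
      ∀ R xd a₂ a₃ : ℝ, 0 < R → 0 < xd → xd ≤ 2 * R / 3 →
        3 * xd / 2 ≤ a₃ → a₃ ≤ a₂ → a₂ ≤ R →
        (ENNReal.ofReal (c * R ^ (γ + α - q) *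
              (Ff (γ + α - q - 1) β (a₃ / R) - Ff (γ + α - q - 1) β (a₂ / R)))
            ≤ ∫⁻ y in Dbox (0 : EuclideanSpace ℝ (Fin (d - 1))) R a₂ \
                  Dbox (0 : EuclideanSpace ℝ (Fin (d - 1))) R a₃,
                ENNReal.ofReal
                  (ff d α R γ β q δ ((0 : EuclideanSpace ℝ (Fin (d - 1))), xd) y)) ∧
        ((∫⁻ y in Dbox (0 : EuclideanSpace ℝ (Fin (d - 1))) R a₂ \
                  Dbox (0 : EuclideanSpace ℝ (Fin (d - 1))) R a₃,
                ENNReal.ofReal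
                  (ff d α R γ β q δ ((0 : EuclideanSpace ℝ (Fin (d - 1))), xd) y))
            ≤ ENNReal.ofReal (C * R ^ (γ + α - q) *
                (Ff (γ + α - q - 1) β (a₃ / R) - Ff (γ + α - q - 1) β (a₂ / R)))) := by
  have hd2 : (2:ℝ) ≤ (d:ℝ) := by exact_mod_cast hd
  have he : -(d:ℝ) + α - q ≤ 0 := by linarith
  set cc : ℝ := (2:ℝ) ^ (-(d:ℝ) + α - q) * Aconst δ *
    (volume (Metric.ball (0 : EuclideanSpace ℝ (Fin (d - 1))) 1)).toReal with hcc_def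
  set CU : ℝ := (6:ℝ) ^ (-(-(d:ℝ) + α - q)) * 6 ^ |δ| * Bconst δ ((1 + q - α) / 2) *
    ∫ w : EuclideanSpace ℝ (Fin (d - 1)), (1 + ‖w‖) ^ (-(d:ℝ) + α - q + (1 + q - α) / 2)
    with hCU_def
  have hv₁ : 0 < (volume (Metric.ball (0 : EuclideanSpace ℝ (Fin (d - 1))) 1)).toReal :=
    ENNReal.toReal_pos (Metric.measure_ball_pos volume _ one_pos).ne' measure_ball_lt_top.ne
  have hcc : 0 < cc := by
    rw [hcc_def]
    have h1 : (0:ℝ) < (2:ℝ) ^ (-(d:ℝ) + α - q) := Real.rpow_pos_of_pos (by norm_num) _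
    have h2 := Aconst_pos δ
    positivity
  have hε : (0:ℝ) < (1 + q - α) / 2 := by linarith
  have hCU0 : 0 ≤ CU := by
    rw [hCU_def]
    have h1 : (0:ℝ) ≤ (6:ℝ) ^ (-(-(d:ℝ) + α - q)) := Real.rpow_nonneg (by norm_num) _
    have h2 : (0:ℝ) ≤ (6:ℝ) ^ |δ| := Real.rpow_nonneg (by norm_num) _
    have h3 := (Bconst_pos (δ := δ) hε).le
    have h4 : 0 ≤ ∫ w : EuclideanSpace ℝ (Fin (d - 1)),
        (1 + ‖w‖) ^ (-(d:ℝ) + α - q + (1 + q - α) / 2) :=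
      integral_nonneg fun w => Real.rpow_nonneg (by positivity) _
    positivity
  refine ⟨cc, max cc (CU * 2 ^ β), hcc, le_max_left _ _, ?_⟩
  intro R xd a₂ a₃ hR hxd hxdR ha₃ h32 h2R
  have h3pos : 0 < a₃ := by linarith
  have hmeas : Measurable fun y : Pt (d - 1) =>
      ENNReal.ofReal (ff d α R γ β q δ ((0 : EuclideanSpace ℝ (Fin (d - 1))), xd) y) :=
    meas_ff d (d - 1) α R γ β q δ xd
  have hset : Dbox (0 : EuclideanSpace ℝ (Fin (d - 1))) R a₂ \
      Dbox (0 : EuclideanSpace ℝ (Fin (d - 1))) R a₃ =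
      (Metric.ball (0 : EuclideanSpace ℝ (Fin (d - 1))) R) ×ˢ (Set.Ico a₃ a₂) := by
    ext y
    simp only [Dbox, Set.mem_diff, Set.mem_setOf_eq, Set.mem_prod, Set.mem_Ico,
      mem_ball_zero_iff, sub_zero]
    constructor
    · rintro ⟨⟨h1, h2, h3'⟩, hnot⟩
      refine ⟨h1, ?_, h3'⟩
      by_contra hlt
      push_neg at hlt
      exact hnot ⟨h1, h2, hlt⟩
    · rintro ⟨h1, h2, h3'⟩
      exact ⟨⟨h1, lt_of_lt_of_le h3pos h2, h3'⟩,
        fun hmem => absurd h2 (not_le.2 hmem.2.2)⟩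
  have hfub : (∫⁻ y in Dbox (0 : EuclideanSpace ℝ (Fin (d - 1))) R a₂ \
        Dbox (0 : EuclideanSpace ℝ (Fin (d - 1))) R a₃,
        ENNReal.ofReal (ff d α R γ β q δ ((0 : EuclideanSpace ℝ (Fin (d - 1))), xd) y)) =
      ∫⁻ t in Set.Ico a₃ a₂, ∫⁻ z in Metric.ball (0 : EuclideanSpace ℝ (Fin (d - 1))) R,
        ENNReal.ofReal (ff d α R γ β q δ ((0 : EuclideanSpace ℝ (Fin (d - 1))), xd) (z, t)) := by
    rw [hset, Measure.volume_eq_prod, ← Measure.prod_restrict,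
      lintegral_prod_symm' _ hmeas]
  have hγeq : R ^ (γ + α - q) = R ^ (γ + α - q - 1 + 1) := by
    congr 1
    ring
  have hΔF := Fdiff_nonneg (γ + α - q - 1) β hβ hR h3pos h32 h2R
  constructor
  · -- lower bound
    rw [hfub, hγeq]
    calc ENNReal.ofReal (cc * R ^ (γ + α - q - 1 + 1) *
          (Ff (γ + α - q - 1) β (a₃ / R) - Ff (γ + α - q - 1) β (a₂ / R)))
        = ENNReal.ofReal cc * ENNReal.ofReal (R ^ (γ + α - q - 1 + 1) *
            (Ff (γ + α - q - 1) β (a₃ / R) - Ff (γ + α - q - 1) β (a₂ / R))) := by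
          rw [← ENNReal.ofReal_mul hcc.le, mul_assoc]
      _ ≤ ENNReal.ofReal cc * ∫⁻ t in Set.Ico a₃ a₂,
            ENNReal.ofReal (t ^ (γ + α - q - 1) * Real.log (1 + 2 * R / t) ^ β) :=
          mul_le_mul_right (oneD_lower (γ + α - q - 1) β hβ hR h3pos h32 h2R) _
      _ = ∫⁻ t in Set.Ico a₃ a₂, ENNReal.ofReal (cc *
            (t ^ (γ + α - q - 1) * Real.log (1 + 2 * R / t) ^ β)) := by
          rw [← lintegral_const_mul' _ _ ENNReal.ofReal_ne_top]
          exact lintegral_congr fun t => (ENNReal.ofReal_mul hcc.le).symm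
      _ ≤ ∫⁻ t in Set.Ico a₃ a₂, ∫⁻ z in Metric.ball (0 : EuclideanSpace ℝ (Fin (d - 1))) R,
            ENNReal.ofReal (ff d α R γ β q δ ((0 : EuclideanSpace ℝ (Fin (d - 1))), xd) (z, t)) := by
          refine lintegral_mono_ae ((ae_restrict_iff' measurableSet_Ico).2
            (Filter.Eventually.of_forall fun t ht => ?_))
          exact slice_lower d hd hβ he hxd (by linarith [ht.1]) hR
            (le_trans (le_of_lt ht.2) h2R)
  · -- upper bound
    rw [hfub, hγeq]
    calc (∫⁻ t in Set.Ico a₃ a₂, ∫⁻ z in Metric.ball (0 : EuclideanSpace ℝ (Fin (d - 1))) R,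
            ENNReal.ofReal (ff d α R γ β q δ ((0 : EuclideanSpace ℝ (Fin (d - 1))), xd) (z, t)))
        ≤ ∫⁻ t in Set.Ico a₃ a₂, ENNReal.ofReal (CU *
            (t ^ (γ + α - q - 1) * Real.log (1 + 2 * R / t) ^ β)) := by
          refine lintegral_mono_ae ((ae_restrict_iff' measurableSet_Ico).2
            (Filter.Eventually.of_forall fun t ht => ?_))
          exact slice_upper d hd hβ hα2 hq hxd (by linarith [ht.1]) hR
      _ = ENNReal.ofReal CU * ∫⁻ t in Set.Ico a₃ a₂,
            ENNReal.ofReal (t ^ (γ + α - q - 1) * Real.log (1 + 2 * R / t) ^ β) := by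
          rw [← lintegral_const_mul' _ _ ENNReal.ofReal_ne_top]
          exact lintegral_congr fun t => ENNReal.ofReal_mul hCU0
      _ ≤ ENNReal.ofReal CU * ENNReal.ofReal ((2:ℝ) ^ β * (R ^ (γ + α - q - 1 + 1) *
            (Ff (γ + α - q - 1) β (a₃ / R) - Ff (γ + α - q - 1) β (a₂ / R)))) :=
          mul_le_mul_right (oneD_upper (γ + α - q - 1) β hβ hR h3pos h32 h2R) _
      _ ≤ ENNReal.ofReal (max cc (CU * 2 ^ β) * R ^ (γ + α - q - 1 + 1) *
            (Ff (γ + α - q - 1) β (a₃ / R) - Ff (γ + α - q - 1) β (a₂ / R))) := by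
          rw [← ENNReal.ofReal_mul hCU0]
          apply ENNReal.ofReal_le_ofReal
          have hb : (0:ℝ) ≤ (2:ℝ) ^ β := Real.rpow_nonneg (by norm_num) _
          have hRp : (0:ℝ) ≤ R ^ (γ + α - q - 1 + 1) := Real.rpow_nonneg hR.le _
          have hle : CU * 2 ^ β ≤ max cc (CU * 2 ^ β) := le_max_right _ _
          calc CU * ((2:ℝ) ^ β * (R ^ (γ + α - q - 1 + 1) *
                (Ff (γ + α - q - 1) β (a₃ / R) - Ff (γ + α - q - 1) β (a₂ / R))))
              = (CU * 2 ^ β) * (R ^ (γ + α - q - 1 + 1) *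
                (Ff (γ + α - q - 1) β (a₃ / R) - Ff (γ + α - q - 1) β (a₂ / R))) := by ring
            _ ≤ max cc (CU * 2 ^ β) * (R ^ (γ + α - q - 1 + 1) *
                (Ff (γ + α - q - 1) β (a₃ / R) - Ff (γ + α - q - 1) β (a₂ / R))) :=
                mul_le_mul_of_nonneg_right hle (mul_nonneg hRp hΔF)
            _ = _ := by ring

end
end

section
/- Let d ≥ 2, 0 < α < 2, γ ≤ −1, q > α − 1, δ ∈ ℝ and β ≥ 0. Then for every R > 0, every point x = (0̃, x_d) with 0 < x_d ≤ 2R/3, and every a₁ with 0 < a₁ ≤ x_d/2, the integral ∫_{D(R,a₁)} f(y; γ, β, q, δ, x) dy is infinite. -/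
open MeasureTheory Real

noncomputable section

/-- The power integral `∫_0^a t^γ dt` diverges for `γ ≤ -1`. -/
lemma lintegral_rpow_Ioo_eq_top {γ a c : ℝ} (hγ : γ ≤ -1) (ha : 0 < a) (hc : 0 < c) :
    ∫⁻ t in Set.Ioo (0 : ℝ) a, ENNReal.ofReal (c * t ^ γ) = ⊤ := by
  by_contra h
  have hmeas : AEStronglyMeasurable (fun t : ℝ => c * t ^ γ)
      (volume.restrict (Set.Ioo (0 : ℝ) a)) :=
    ((measurable_id.pow_const γ).const_mul c).aestronglyMeasurable
  have hpos : 0 ≤ᵐ[volume.restrict (Set.Ioo (0 : ℝ) a)] fun t : ℝ => c * t ^ γ := by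
    filter_upwards [ae_restrict_mem measurableSet_Ioo] with t ht
    exact mul_nonneg hc.le (Real.rpow_nonneg ht.1.le γ)
  have hint : Integrable (fun t : ℝ => c * t ^ γ) (volume.restrict (Set.Ioo (0 : ℝ) a)) :=
    (lintegral_ofReal_ne_top_iff_integrable hmeas hpos).mp h
  have hint2 : IntegrableOn (fun t : ℝ => t ^ γ) (Set.Ioo (0 : ℝ) a) := by
    have := hint.const_mul c⁻¹
    simpa [IntegrableOn, ← mul_assoc, inv_mul_cancel₀ hc.ne'] using this
  rw [intervalIntegral.integrableOn_Ioo_rpow_iff ha] at hint2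
  linarith

set_option maxHeartbeats 1000000 in
theorem stmt_3 (d : ℕ) (hd : 2 ≤ d) (α γ q δ β : ℝ)
    (hα0 : 0 < α) (hα2 : α < 2) (hγ : γ ≤ -1) (hq : α - 1 < q) (hβ : 0 ≤ β) :
    ∀ R xd a₁ : ℝ, 0 < R → 0 < xd → xd ≤ 2 * R / 3 → 0 < a₁ → a₁ ≤ xd / 2 →
      (∫⁻ y in Dbox (0 : EuclideanSpace ℝ (Fin (d - 1))) R a₁,
          ENNReal.ofReal (ff d α R γ β q δ ((0 : EuclideanSpace ℝ (Fin (d - 1))), xd) y))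
        = ⊤ := by
  intro R xd a₁ hR hxd hxdR ha₁ ha₁xd
  set m := d - 1
  set x : Pt m := ((0 : EuclideanSpace ℝ (Fin m)), xd) with hx
  have hd2 : (2 : ℝ) ≤ (d : ℝ) := by exact_mod_cast hd
  set e : ℝ := -(d : ℝ) + α - q with he
  have he0 : e ≤ 0 := by simp only [he]; linarith
  set U : ℝ := 1 + 2 * (R + xd) / xd with hU
  have hRxd : 0 < R + xd := by linarith
  have hU2 : 2 ≤ U := by
    have : 1 ≤ 2 * (R + xd) / xd := by
      rw [le_div_iff₀ hxd]; linarith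
    simp only [hU]; linarith
  have hlog2 : 0 < Real.log 2 := Real.log_pos (by norm_num)
  have hlogU : Real.log 2 ≤ Real.log U := Real.log_le_log (by norm_num) hU2
  set c : ℝ := (R + xd) ^ e * min ((Real.log 2) ^ δ) ((Real.log U) ^ δ) with hc
  have hcpos : 0 < c := by
    apply mul_pos (Real.rpow_pos_of_pos hRxd e)
    exact lt_min (Real.rpow_pos_of_pos hlog2 δ) (Real.rpow_pos_of_pos (hlog2.trans_le hlogU) δ)
  -- pointwise lower bound on the box
  have key : ∀ y ∈ Dbox (0 : EuclideanSpace ℝ (Fin m)) R a₁,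
      c * y.2 ^ γ ≤ ff d α R γ β q δ x y := by
    rintro y ⟨hy1, hy2, hy3⟩
    rw [sub_zero] at hy1
    have hy2xd : y.2 < xd / 2 := lt_of_lt_of_le hy3 ha₁xd
    set n : ℝ := nrm (x - y) with hn
    have hnval : n = Real.sqrt (‖y.1‖ ^ 2 + (xd - y.2) ^ 2) := by
      simp only [hn, nrm, hx, Prod.fst_sub, Prod.snd_sub, zero_sub, norm_neg]
    have hn_lb : xd / 2 < n := by
      rw [hnval]
      have h1 : xd / 2 < xd - y.2 := by linarith
      calc xd / 2 < xd - y.2 := h1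
        _ = Real.sqrt ((xd - y.2) ^ 2) := (Real.sqrt_sq (by linarith)).symm
        _ ≤ Real.sqrt (‖y.1‖ ^ 2 + (xd - y.2) ^ 2) := by
            apply Real.sqrt_le_sqrt; nlinarith [norm_nonneg y.1]
    have hnpos : 0 < n := lt_trans (by linarith) hn_lb
    have hn_ub : n ≤ R + xd := by
      rw [hnval]
      calc Real.sqrt (‖y.1‖ ^ 2 + (xd - y.2) ^ 2) ≤ Real.sqrt ((R + xd) ^ 2) := by
            apply Real.sqrt_le_sqrt; nlinarith [norm_nonneg y.1]
        _ = R + xd := Real.sqrt_sq hRxd.le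
    -- factor 2 : the kernel power
    have h2 : (R + xd) ^ e ≤ n ^ e := Real.rpow_le_rpow_of_nonpos hnpos hn_ub he0
    -- factor 3 : the first log
    have h3 : 1 ≤ (Real.log (1 + 2 * R / y.2)) ^ β := by
      apply Real.one_le_rpow _ hβ
      have h7 : (7 : ℝ) ≤ 1 + 2 * R / y.2 := by
        have : 6 ≤ 2 * R / y.2 := by
          rw [le_div_iff₀ hy2]; linarith
        linarith
      have : Real.log 7 ≤ Real.log (1 + 2 * R / y.2) := Real.log_le_log (by norm_num) h7
      have h17 : 1 ≤ Real.log 7 := by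
        rw [Real.le_log_iff_exp_le (by norm_num)]
        have := Real.exp_one_lt_d9
        linarith
      linarith
    -- factor 4 : the second log
    have hmaxeq : max x.2 y.2 = xd := max_eq_left (by simp only [hx]; linarith)
    set M : ℝ := min (max x.2 y.2) n with hM
    have hMn : M ≤ n := min_le_right _ _
    have hMlb : xd / 2 ≤ M := by
      rw [hM, hmaxeq]; exact le_min (by linarith) hn_lb.le
    have hMpos : 0 < M := lt_of_lt_of_le (by linarith) hMlb
    have ht1 : 1 ≤ n / M := (one_le_div hMpos).mpr hMn
    have htU : 1 + n / M ≤ U := by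
      have : n / M ≤ (R + xd) / (xd / 2) := div_le_div₀ hRxd.le hn_ub (by linarith) hMlb
      have heq : (R + xd) / (xd / 2) = 2 * (R + xd) / xd := by
        field_simp
      rw [hU]; rw [heq] at this; linarith
    have hL2 : Real.log 2 ≤ Real.log (1 + n / M) := Real.log_le_log (by norm_num) (by linarith)
    have hLU : Real.log (1 + n / M) ≤ Real.log U := Real.log_le_log (by linarith [hlog2]) htU
    have h4 : min ((Real.log 2) ^ δ) ((Real.log U) ^ δ) ≤ (Real.log (1 + n / M)) ^ δ := by
      rcases le_or_gt 0 δ with hδ | hδ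
      · exact le_trans (min_le_left _ _) (Real.rpow_le_rpow hlog2.le hL2 hδ)
      · exact le_trans (min_le_right _ _)
          (Real.rpow_le_rpow_of_nonpos (hlog2.trans_le hL2) hLU hδ.le)
    -- combine
    have hy2pow : 0 ≤ y.2 ^ γ := Real.rpow_nonneg hy2.le γ
    have hff : ff d α R γ β q δ x y
        = y.2 ^ γ * n ^ e * (Real.log (1 + 2 * R / y.2)) ^ β
          * (Real.log (1 + n / M)) ^ δ := by
      simp only [ff, hn, hM, he]
    rw [hff]
    have hcy : c * y.2 ^ γ
        = y.2 ^ γ * (R + xd) ^ e * 1 * min ((Real.log 2) ^ δ) ((Real.log U) ^ δ) := by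
      rw [hc]; ring
    rw [hcy]
    have hcδ : (0:ℝ) ≤ min ((Real.log 2) ^ δ) ((Real.log U) ^ δ) :=
      (lt_min (Real.rpow_pos_of_pos hlog2 δ)
        (Real.rpow_pos_of_pos (hlog2.trans_le hlogU) δ)).le
    have h12 : y.2 ^ γ * (R + xd) ^ e ≤ y.2 ^ γ * n ^ e :=
      mul_le_mul_of_nonneg_left h2 hy2pow
    have hA2 : (0:ℝ) ≤ y.2 ^ γ * n ^ e :=
      mul_nonneg hy2pow (Real.rpow_nonneg hnpos.le e)
    have h123 : y.2 ^ γ * (R + xd) ^ e * 1 ≤ y.2 ^ γ * n ^ e * (Real.log (1 + 2 * R / y.2)) ^ β :=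
      mul_le_mul h12 h3 zero_le_one hA2
    exact mul_le_mul h123 h4 hcδ (mul_nonneg hA2 (zero_le_one.trans h3))
  -- the box as a product set
  have hset : Dbox (0 : EuclideanSpace ℝ (Fin m)) R a₁
      = (Metric.ball (0 : EuclideanSpace ℝ (Fin m)) R) ×ˢ (Set.Ioo (0 : ℝ) a₁) := by
    ext y
    simp [Dbox, Set.mem_prod, Metric.mem_ball, dist_eq_norm, and_assoc]
  have hDmeas : MeasurableSet (Dbox (0 : EuclideanSpace ℝ (Fin m)) R a₁) := by
    rw [hset]; exact measurableSet_ball.prod measurableSet_Ioo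
  -- lower bound the integral
  have hlow : (∫⁻ y in Dbox (0 : EuclideanSpace ℝ (Fin m)) R a₁,
      ENNReal.ofReal (c * y.2 ^ γ)) ≤
      ∫⁻ y in Dbox (0 : EuclideanSpace ℝ (Fin m)) R a₁,
        ENNReal.ofReal (ff d α R γ β q δ x y) := by
    apply setLIntegral_mono' hDmeas
    intro y hy
    exact ENNReal.ofReal_le_ofReal (key y hy)
  rw [eq_top_iff]
  refine le_trans (le_of_eq ?_) hlow
  -- compute the lower integral
  rw [hset]
  have hprod : (volume : Measure (Pt m)) = (volume : Measure (EuclideanSpace ℝ (Fin m))).prod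
      (volume : Measure ℝ) := rfl
  rw [hprod, ← Measure.prod_restrict]
  rw [lintegral_prod _ (by
    apply AEMeasurable.ennreal_ofReal
    exact ((measurable_snd.pow_const γ).const_mul c).aemeasurable)]
  have hinner : ∀ xx : EuclideanSpace ℝ (Fin m),
      (∫⁻ b in Set.Ioo (0 : ℝ) a₁, ENNReal.ofReal (c * (xx, b).2 ^ γ)) = ⊤ := fun _ => by
    simpa using lintegral_rpow_Ioo_eq_top hγ ha₁ hcpos
  simp only [hinner]
  rw [lintegral_const, Measure.restrict_apply_univ,
    lintegral_rpow_Ioo_eq_top hγ ha₁ hcpos,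
    ENNReal.top_mul (Metric.measure_ball_pos volume 0 hR).ne']

end
end

section
/- Let d ≥ 2, 0 < α < 2, and let β₁, β₂, β₃, β₄ ≥ 0 with β₁ > 0 if β₃ > 0 and β₂ > 0 if β₄ > 0. Let p satisfy (α−1)₊ < p < α + (β₁ + (β₁ ∧ β₂))/2. Then there exists a constant C > 0, depending only on d, α, p, β₁, β₂, β₃, β₄, such that for all x, y ∈ ℝ^d_+ with |x̃ − ỹ| > 3 and 0 < x_d, y_d < 1/4, one has ∫_{D_x̃(1,1)} ∫_{D_ỹ(1,1)} (x_d/|w−x| ∧ 1)^p (y_d/|z−y| ∧ 1)^p [(w_d ∧ z_d)^{β₁} (w_d ∨ z_d)^{β₂} / (|x−w|^{d−α} |y−z|^{d−α})] (log(1 + (w_d ∨ z_d)/(w_d ∧ z_d)))^{β₃} (log(1 + 8/(w_d ∨ z_d)))^{β₄} dz dw ≤ C x_d^p y_d^p. -/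
open MeasureTheory Real
open Set Metric

noncomputable section

lemma log_rpow_bound (β ε : ℝ) (hβ : 0 ≤ β) (hε : 0 ≤ ε) (h : 0 < β → 0 < ε) :
    ∃ C : ℝ, 0 < C ∧ ∀ t : ℝ, 1 ≤ t → Real.log (1 + t) ^ β ≤ C * t ^ ε := by
  rcases eq_or_lt_of_le hβ with hβ0 | hβpos
  · refine ⟨1, one_pos, fun t ht => ?_⟩
    rw [← hβ0, Real.rpow_zero, one_mul]
    calc (1:ℝ) = 1 ^ ε := (Real.one_rpow ε).symm
      _ ≤ t ^ ε := Real.rpow_le_rpow zero_le_one ht hε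
  · have hεpos : 0 < ε := h hβpos
    set δ := ε / β with hδ
    have hδpos : 0 < δ := div_pos hεpos hβpos
    refine ⟨(2 ^ δ / δ) ^ β, by positivity, fun t ht => ?_⟩
    have ht0 : 0 < t := lt_of_lt_of_le one_pos ht
    have hlog : Real.log (1 + t) ≤ (2 ^ δ / δ) * t ^ δ := by
      calc Real.log (1 + t) ≤ (1 + t) ^ δ / δ := Real.log_le_rpow_div (by linarith) hδpos
        _ ≤ (2 * t) ^ δ / δ := by
            gcongr
            · linarith
        _ = (2 ^ δ / δ) * t ^ δ := by
            rw [Real.mul_rpow zero_le_two ht0.le]; ring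
    have hlognn : 0 ≤ Real.log (1 + t) := Real.log_nonneg (by linarith)
    calc Real.log (1 + t) ^ β ≤ ((2 ^ δ / δ) * t ^ δ) ^ β :=
          Real.rpow_le_rpow hlognn hlog hβ
      _ = (2 ^ δ / δ) ^ β * t ^ ε := by
          rw [Real.mul_rpow (by positivity) (by positivity), ← Real.rpow_mul ht0.le]
          congr 2
          rw [hδ]; field_simp

lemma log8_bound (β ε : ℝ) (hβ : 0 ≤ β) (hε : 0 ≤ ε) (h : 0 < β → 0 < ε) :
    ∃ C : ℝ, 0 < C ∧ ∀ s : ℝ, 0 < s → s ≤ 1 → Real.log (1 + 8 / s) ^ β ≤ C * s ^ (-ε) := by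
  rcases eq_or_lt_of_le hβ with hβ0 | hβpos
  · refine ⟨1, one_pos, fun s hs hs1 => ?_⟩
    rw [← hβ0, Real.rpow_zero, one_mul]
    exact Real.one_le_rpow_of_pos_of_le_one_of_nonpos hs hs1 (neg_nonpos.2 hε)
  · have hεpos : 0 < ε := h hβpos
    set δ := ε / β with hδ
    have hδpos : 0 < δ := div_pos hεpos hβpos
    refine ⟨(9 ^ δ / δ) ^ β, by positivity, fun s hs hs1 => ?_⟩
    have h8 : (0:ℝ) < 8 / s := by positivity
    have hlog : Real.log (1 + 8 / s) ≤ (9 ^ δ / δ) * s ^ (-δ) := by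
      calc Real.log (1 + 8 / s) ≤ (1 + 8 / s) ^ δ / δ := Real.log_le_rpow_div (by linarith) hδpos
        _ ≤ (9 / s) ^ δ / δ := by
            have h1s : 1 ≤ 1 / s := one_le_one_div hs hs1
            have h9 : 1 + 8 / s ≤ 9 / s := by
              have : 1 / s + 8 / s = 9 / s := by ring
              linarith
            gcongr
        _ = (9 ^ δ / δ) * s ^ (-δ) := by
            rw [Real.div_rpow (by norm_num) hs.le, Real.rpow_neg hs.le]; ring
    have hlognn : 0 ≤ Real.log (1 + 8 / s) := Real.log_nonneg (by linarith)
    calc Real.log (1 + 8 / s) ^ β ≤ ((9 ^ δ / δ) * s ^ (-δ)) ^ β :=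
          Real.rpow_le_rpow hlognn hlog hβ
      _ = (9 ^ δ / δ) ^ β * s ^ (-ε) := by
          rw [Real.mul_rpow (by positivity) (by positivity), ← Real.rpow_mul hs.le]
          congr 2
          rw [hδ]; field_simp

lemma expmin (u v a b γ : ℝ) (hu : 0 < u) (huv : u ≤ v) (hv1 : v ≤ 1)
    (hG : 2 * γ ≤ a + min a b) : u ^ a * v ^ b ≤ (u * v) ^ γ := by
  have hv : 0 < v := lt_of_lt_of_le hu huv
  have hu1 : u ≤ 1 := le_trans huv hv1
  rw [Real.mul_rpow hu.le hv.le]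
  rcases le_or_gt γ b with hb | hb
  · have ha : γ ≤ a := by
      rcases min_cases a b with ⟨h1, h2⟩ | ⟨h1, h2⟩ <;> rw [h1] at hG <;> linarith
    exact mul_le_mul (Real.rpow_le_rpow_of_exponent_ge hu hu1 ha)
      (Real.rpow_le_rpow_of_exponent_ge hv hv1 hb)
      (Real.rpow_nonneg hv.le b) (Real.rpow_nonneg hu.le γ)
  · have hab2 : 2 * γ ≤ a + b := le_trans hG (by have := min_le_right a b; linarith)
    have haγ : 0 ≤ a - γ := by linarith
    have e1 : u ^ a = u ^ γ * u ^ (a - γ) := by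
      rw [← Real.rpow_add hu]; ring_nf
    have e2 : v ^ b = v ^ γ * v ^ (b - γ) := by
      rw [← Real.rpow_add hv]; ring_nf
    have hbd : u ^ (a - γ) * v ^ (b - γ) ≤ 1 := by
      calc u ^ (a - γ) * v ^ (b - γ) ≤ v ^ (a - γ) * v ^ (b - γ) :=
            mul_le_mul_of_nonneg_right (Real.rpow_le_rpow hu.le huv haγ)
              (Real.rpow_nonneg hv.le _)
        _ = v ^ (a - γ + (b - γ)) := (Real.rpow_add hv _ _).symm
        _ ≤ 1 := Real.rpow_le_one hv.le hv1 (by linarith)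
    calc u ^ a * v ^ b = (u ^ γ * v ^ γ) * (u ^ (a - γ) * v ^ (b - γ)) := by
          rw [e1, e2]; ring
      _ ≤ (u ^ γ * v ^ γ) * 1 := by
          apply mul_le_mul_of_nonneg_left hbd
          positivity
      _ = u ^ γ * v ^ γ := mul_one _

lemma psi_anti (γ p s t : ℝ) (hγ0 : 0 ≤ γ) (hγp : γ ≤ p) (hs : 0 < s) (hst : s ≤ t) :
    min t 1 ^ γ * t ^ (-p) ≤ min s 1 ^ γ * s ^ (-p) := by
  have ht : 0 < t := lt_of_lt_of_le hs hst
  have hp0 : 0 ≤ p := le_trans hγ0 hγp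
  have comb : ∀ x : ℝ, 0 < x → x ^ γ * x ^ (-p) = x ^ (γ - p) := fun x hx => by
    rw [← Real.rpow_add hx]; ring_nf
  rcases le_total t 1 with h1 | h1
  · rw [min_eq_left h1, min_eq_left (le_trans hst h1), comb t ht, comb s hs]
    exact Real.rpow_le_rpow_of_nonpos hs hst (by linarith)
  · rcases le_total s 1 with h2 | h2
    · rw [min_eq_right h1, min_eq_left h2, Real.one_rpow, one_mul, comb s hs]
      calc t ^ (-p) ≤ 1 := Real.rpow_le_one_of_one_le_of_nonpos h1 (neg_nonpos.2 hp0)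
        _ ≤ s ^ (γ - p) :=
          Real.one_le_rpow_of_pos_of_le_one_of_nonpos hs h2 (by linarith)
    · rw [min_eq_right h1, min_eq_right h2, Real.one_rpow, one_mul, one_mul]
      exact Real.rpow_le_rpow_of_nonpos hs hst (neg_nonpos.2 hp0)

lemma key1 (c N p : ℝ) (hc : 0 < c) (hN : 0 ≤ N) (hp : 0 < p) :
    min (c / N) 1 ^ p ≤ c ^ p * max N c ^ (-p) := by
  rcases eq_or_lt_of_le hN with h0 | hN0
  · rw [← h0, div_zero, min_eq_left zero_le_one, Real.zero_rpow hp.ne']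
    positivity
  · have hmax : 0 < max N c := lt_of_lt_of_le hc (le_max_right N c)
    have heq : min (c / N) 1 = c / max N c := by
      rcases le_total c N with h | h
      · rw [min_eq_left ((div_le_one hN0).2 h), max_eq_left h]
      · rw [min_eq_right ((one_le_div hN0).2 h), max_eq_right h, div_self hc.ne']
    rw [heq, Real.div_rpow hc.le hmax.le, Real.rpow_neg hmax.le]
    rw [div_eq_mul_inv]

lemma key2 (α p γ dd N c w2 : ℝ) (hγ0 : 0 ≤ γ) (hγp : γ ≤ p) (hc : 0 < c)
    (hw2 : 0 < w2) (hw21 : w2 ≤ 1) (hwcN : w2 ≤ c + N) (hN : 0 ≤ N) (hαd : α - dd < 0) :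
    w2 ^ γ * max N c ^ (-p) * N ^ (α - dd) ≤ 2 ^ γ * N ^ (γ + α - p - dd) := by
  have he0 : γ + α - p - dd < 0 := by linarith
  rcases eq_or_lt_of_le hN with h0 | hN0
  · rw [← h0, Real.zero_rpow hαd.ne, Real.zero_rpow he0.ne, mul_zero, mul_zero]
  · have hM : 0 < max N c := lt_of_lt_of_le hc (le_max_right N c)
    have h2M : w2 ≤ min (2 * max N c) 1 :=
      le_min (by have h1 := le_max_left N c; have h2 := le_max_right N c; linarith) hw21
    have hs1 : w2 ^ γ ≤ min (2 * max N c) 1 ^ γ := Real.rpow_le_rpow hw2.le h2M hγ0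
    have hs2 : min (2 * max N c) 1 ≤ 2 * min (max N c) 1 := by
      rcases le_total (max N c) 1 with h | h
      · rw [min_eq_left h]; exact min_le_left _ _
      · rw [min_eq_right h]
        calc min (2 * max N c) 1 ≤ 1 := min_le_right _ _
          _ ≤ 2 * 1 := by norm_num
    have hs3 : w2 ^ γ ≤ 2 ^ γ * min (max N c) 1 ^ γ := by
      calc w2 ^ γ ≤ min (2 * max N c) 1 ^ γ := hs1
        _ ≤ (2 * min (max N c) 1) ^ γ := by
            apply Real.rpow_le_rpow (le_min (by positivity) zero_le_one) hs2 hγ0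
        _ = 2 ^ γ * min (max N c) 1 ^ γ := Real.mul_rpow zero_le_two (by positivity)
    have hpsi : min (max N c) 1 ^ γ * max N c ^ (-p) ≤ min N 1 ^ γ * N ^ (-p) :=
      psi_anti γ p N (max N c) hγ0 hγp hN0 (le_max_left N c)
    have hminN : min N 1 ^ γ ≤ N ^ γ :=
      Real.rpow_le_rpow (le_min hN0.le zero_le_one) (min_le_left _ _) hγ0
    calc w2 ^ γ * max N c ^ (-p) * N ^ (α - dd)
        ≤ (2 ^ γ * min (max N c) 1 ^ γ) * max N c ^ (-p) * N ^ (α - dd) :=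
          mul_le_mul_of_nonneg_right
            (mul_le_mul_of_nonneg_right hs3 (Real.rpow_nonneg hM.le _))
            (Real.rpow_nonneg hN0.le _)
      _ = 2 ^ γ * (min (max N c) 1 ^ γ * max N c ^ (-p)) * N ^ (α - dd) := by ring
      _ ≤ 2 ^ γ * (min N 1 ^ γ * N ^ (-p)) * N ^ (α - dd) :=
          mul_le_mul_of_nonneg_right
            (mul_le_mul_of_nonneg_left hpsi (by positivity))
            (Real.rpow_nonneg hN0.le _)
      _ ≤ 2 ^ γ * (N ^ γ * N ^ (-p)) * N ^ (α - dd) :=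
          mul_le_mul_of_nonneg_right
            (mul_le_mul_of_nonneg_left
              (mul_le_mul_of_nonneg_right hminN (Real.rpow_nonneg hN0.le _))
              (by positivity))
            (Real.rpow_nonneg hN0.le _)
      _ = 2 ^ γ * N ^ (γ + α - p - dd) := by
          rw [← Real.rpow_add hN0, mul_assoc, ← Real.rpow_add hN0]
          congr 1
          ring

lemma decouple (β₁ β₂ β₃ β₄ σ γ : ℝ) (hβ₁ : 0 ≤ β₁) (hβ₂ : 0 ≤ β₂) (hβ₃ : 0 ≤ β₃)
    (hβ₄ : 0 ≤ β₄) (h13 : 0 < β₃ → 0 < β₁) (h24 : 0 < β₄ → 0 < β₂)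
    (hσ : σ = (β₁ + min β₁ β₂) / 2) (hγ0 : 0 ≤ γ) (hγσ : γ < σ ∨ γ = 0) :
    ∃ CL : ℝ, 0 < CL ∧ ∀ u v : ℝ, 0 < u → u ≤ 1 → 0 < v → v ≤ 1 →
      min u v ^ β₁ * max u v ^ β₂ * Real.log (1 + max u v / min u v) ^ β₃ *
        Real.log (1 + 8 / max u v) ^ β₄ ≤ CL * (u * v) ^ γ := by
  have hminb : 0 ≤ min β₁ β₂ := le_min hβ₁ hβ₂
  -- choose ε₃ ε₄
  obtain ⟨ε₃, ε₄, hε₃0, hε₃pos, hε₄0, hε₄pos, hP3⟩ :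
      ∃ ε₃ ε₄ : ℝ, 0 ≤ ε₃ ∧ (0 < β₃ → 0 < ε₃) ∧ 0 ≤ ε₄ ∧ (0 < β₄ → 0 < ε₄) ∧
        2 * γ ≤ (β₁ - ε₃) + min (β₁ - ε₃) (β₂ + ε₃ - ε₄) := by
    by_cases hη : 0 < σ - γ
    · refine ⟨if 0 < β₃ then (σ - γ) / 2 else 0, if 0 < β₄ then min (β₂ / 2) ((σ - γ) / 2) else 0,
        ?_, ?_, ?_, ?_, ?_⟩
      · split <;> linarith
      · intro h; rw [if_pos h]; linarith
      · split
        · exact le_min (by linarith [h24 ‹0 < β₄›]) (by linarith)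
        · exact le_rfl
      · intro h; rw [if_pos h]; exact lt_min (by linarith [h24 h]) (by linarith)
      · set e3 := if 0 < β₃ then (σ - γ) / 2 else 0 with he3
        set e4 := if 0 < β₄ then min (β₂ / 2) ((σ - γ) / 2) else 0 with he4
        have h3 : 0 ≤ e3 ∧ e3 ≤ (σ - γ) / 2 := by
          rw [he3]; split <;> constructor <;> linarith
        have h4 : 0 ≤ e4 ∧ e4 ≤ (σ - γ) / 2 := by
          rw [he4]; split
          · constructor
            · exact le_min (by linarith [h24 ‹0 < β₄›]) (by linarith)
            · exact min_le_right _ _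
          · constructor <;> linarith
        have hm : min β₁ β₂ - e3 - e4 ≤ min (β₁ - e3) (β₂ + e3 - e4) := by
          apply le_min
          · have := min_le_left β₁ β₂; linarith
          · have := min_le_right β₁ β₂; linarith
        have := min_le_left β₁ β₂
        linarith
    · -- σ ≤ γ hence γ = 0 and σ = 0 and β₁ = 0 and β₃ = 0
      have hγ : γ = 0 := by
        rcases hγσ with h | h
        · linarith
        · exact h
      have hσ0 : 0 ≤ σ := by rw [hσ]; linarith
      have hσz : σ = 0 := by linarith [not_lt.mp hη]
      have hβ₁z : β₁ = 0 := by
        rw [hσ] at hσz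
        have : min β₁ β₂ ≤ β₁ := min_le_left _ _
        linarith [hminb]
      refine ⟨0, if 0 < β₄ then β₂ / 2 else 0, le_rfl, ?_, ?_, ?_, ?_⟩
      · intro h; exact absurd (h13 h) (by rw [hβ₁z]; exact lt_irrefl 0)
      · split
        · linarith [h24 ‹0 < β₄›]
        · exact le_rfl
      · intro h; rw [if_pos h]; linarith [h24 h]
      · set e4 := if 0 < β₄ then β₂ / 2 else 0 with he4
        have h4 : e4 ≤ β₂ := by rw [he4]; split <;> linarith
        rw [hγ, hβ₁z]
        have : (0:ℝ) ≤ min (0 - 0) (β₂ + 0 - e4) := le_min (by norm_num) (by linarith)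
        linarith
  obtain ⟨C₃, hC₃0, hC₃⟩ := log_rpow_bound β₃ ε₃ hβ₃ hε₃0 hε₃pos
  obtain ⟨C₄, hC₄0, hC₄⟩ := log8_bound β₄ ε₄ hβ₄ hε₄0 hε₄pos
  refine ⟨C₃ * C₄, by positivity, ?_⟩
  have Q : ∀ u v : ℝ, 0 < u → u ≤ 1 → 0 < v → v ≤ 1 → u ≤ v →
      u ^ β₁ * v ^ β₂ * Real.log (1 + v / u) ^ β₃ * Real.log (1 + 8 / v) ^ β₄
        ≤ C₃ * C₄ * (u * v) ^ γ := by
    intro u v hu hu1 hv hv1 huv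
    have h1 : Real.log (1 + v / u) ^ β₃ ≤ C₃ * (v / u) ^ ε₃ :=
      hC₃ (v / u) ((one_le_div hu).2 huv)
    have h2 : Real.log (1 + 8 / v) ^ β₄ ≤ C₄ * v ^ (-ε₄) :=
      hC₄ v hv hv1
    have hL3 : 0 ≤ Real.log (1 + v / u) := Real.log_nonneg (by
      have : 0 ≤ v / u := by positivity
      linarith)
    have hL4 : 0 ≤ Real.log (1 + 8 / v) := Real.log_nonneg (by
      have : 0 ≤ 8 / v := by positivity
      linarith)
    calc u ^ β₁ * v ^ β₂ * Real.log (1 + v / u) ^ β₃ * Real.log (1 + 8 / v) ^ β₄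
        ≤ u ^ β₁ * v ^ β₂ * (C₃ * (v / u) ^ ε₃) * (C₄ * v ^ (-ε₄)) := by
          apply mul_le_mul _ h2 (Real.rpow_nonneg hL4 _) (by positivity)
          exact mul_le_mul_of_nonneg_left h1 (by positivity)
      _ = C₃ * C₄ * (u ^ (β₁ - ε₃) * v ^ (β₂ + ε₃ - ε₄)) := by
          rw [Real.div_rpow hv.le hu.le, Real.rpow_sub hu, Real.rpow_sub hv,
            Real.rpow_add hv, Real.rpow_neg hv.le]
          field_simp
      _ ≤ C₃ * C₄ * (u * v) ^ γ := by
          apply mul_le_mul_of_nonneg_left (expmin u v _ _ γ hu huv hv1 hP3) (by positivity)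
  intro u v hu hu1 hv hv1
  rcases le_total u v with h | h
  · rw [min_eq_left h, max_eq_right h]
    exact Q u v hu hu1 hv hv1 h
  · rw [min_eq_right h, max_eq_left h, mul_comm u v]
    exact Q v u hv hv1 hu hu1 h

instance instHaarPt (m : ℕ) : (volume : Measure (Pt m)).IsAddHaarMeasure :=
  MeasureTheory.Measure.prod.instIsAddHaarMeasure volume volume

lemma frPt (m : ℕ) : Module.finrank ℝ (Pt m) = m + 1 := by
  simp [Module.finrank_prod]

lemma nrm_nonneg {m : ℕ} (v : Pt m) : 0 ≤ nrm v := Real.sqrt_nonneg _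

lemma nrm_neg {m : ℕ} (v : Pt m) : nrm (-v) = nrm v := by
  simp [nrm]

lemma abs_snd_le_nrm {m : ℕ} (v : Pt m) : |v.2| ≤ nrm v := by
  rw [nrm]
  nlinarith [Real.sq_sqrt (by positivity : (0:ℝ) ≤ ‖v.1‖ ^ 2 + v.2 ^ 2),
    Real.sqrt_nonneg (‖v.1‖ ^ 2 + v.2 ^ 2), sq_abs v.2, abs_nonneg v.2]

lemma prodnorm_le_nrm {m : ℕ} (v : Pt m) : ‖v‖ ≤ nrm v := by
  rw [Prod.norm_def]
  apply max_le
  · rw [nrm]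
    have h1 : ‖v.1‖ ^ 2 ≤ ‖v.1‖ ^ 2 + v.2 ^ 2 := le_add_of_nonneg_right (by positivity)
    nlinarith [Real.sq_sqrt (by positivity : (0:ℝ) ≤ ‖v.1‖ ^ 2 + v.2 ^ 2),
      Real.sqrt_nonneg (‖v.1‖ ^ 2 + v.2 ^ 2), norm_nonneg v.1]
  · rw [Real.norm_eq_abs]
    exact abs_snd_le_nrm v

lemma measurableSet_Dbox {m : ℕ} (w : EuclideanSpace ℝ (Fin m)) (a b : ℝ) :
    MeasurableSet (Dbox w a b) := by
  show MeasurableSet {y : Pt m | ‖y.1 - w‖ < a ∧ 0 < y.2 ∧ y.2 < b}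
  rw [Set.setOf_and, Set.setOf_and]
  exact (measurableSet_lt (by fun_prop) measurable_const).inter
    ((measurableSet_lt measurable_const (by fun_prop)).inter
      (measurableSet_lt (by fun_prop) measurable_const))

lemma rad_finite (m : ℕ) (e : ℝ) (he0 : e < 0) (hed : -(m + 1 : ℝ) < e) :
    (∫⁻ v in closedBall (0 : Pt m) 2, ENNReal.ofReal (‖v‖ ^ e)) < ⊤ := by
  have hmeas : Measurable fun v : Pt m => ‖v‖ ^ e := by fun_prop
  have h_pos : ∀ v : Pt m, 0 ≤ ‖v‖ ^ e := fun v => rpow_nonneg (norm_nonneg v) e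
  rw [lintegral_eq_lintegral_meas_le (volume.restrict (closedBall (0 : Pt m) 2))
    (Filter.Eventually.of_forall h_pos) hmeas.aemeasurable]
  have hq : e⁻¹ * (m + 1) < -1 := by
    rw [← div_eq_inv_mul, div_lt_iff_of_neg he0]
    linarith
  have hbound : ∀ t : ℝ,
      (volume.restrict (closedBall (0 : Pt m) 2)) {a : Pt m | t ≤ ‖a‖ ^ e}
        ≤ volume (closedBall (0 : Pt m) 2) := by
    intro t
    calc (volume.restrict (closedBall (0 : Pt m) 2)) {a : Pt m | t ≤ ‖a‖ ^ e}
        ≤ (volume.restrict (closedBall (0 : Pt m) 2)) univ := measure_mono (subset_univ _)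
      _ = volume (closedBall (0 : Pt m) 2) := by
          rw [Measure.restrict_apply_univ]
  have key : ∀ t ∈ Ioi (1 : ℝ),
      (volume.restrict (closedBall (0 : Pt m) 2)) {a : Pt m | t ≤ ‖a‖ ^ e}
        ≤ ENNReal.ofReal (t ^ (e⁻¹ * (m + 1))) * volume (ball (0 : Pt m) 1) := by
    intro t ht
    have ht0 : (0 : ℝ) < t := lt_trans one_pos ht
    have hsub : {a : Pt m | t ≤ ‖a‖ ^ e} ⊆ closedBall 0 (t ^ e⁻¹) := by
      intro a ha
      have hane : a ≠ 0 := by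
        rintro rfl
        simp only [mem_setOf_eq, norm_zero, Real.zero_rpow he0.ne] at ha
        linarith
      have hpos : 0 < ‖a‖ := norm_pos_iff.2 hane
      rw [mem_closedBall_zero_iff]
      exact (Real.le_rpow_inv_iff_of_neg hpos ht0 he0).2 ha
    have hr0 : (0 : ℝ) ≤ t ^ e⁻¹ := rpow_nonneg ht0.le _
    calc (volume.restrict (closedBall (0 : Pt m) 2)) {a : Pt m | t ≤ ‖a‖ ^ e}
        ≤ volume {a : Pt m | t ≤ ‖a‖ ^ e} := Measure.restrict_apply_le _ _
      _ ≤ volume (closedBall (0 : Pt m) (t ^ e⁻¹)) := measure_mono hsub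
      _ = ENNReal.ofReal ((t ^ e⁻¹) ^ Module.finrank ℝ (Pt m)) * volume (ball (0 : Pt m) 1) :=
          Measure.addHaar_closedBall _ _ hr0
      _ = ENNReal.ofReal (t ^ (e⁻¹ * (m + 1))) * volume (ball (0 : Pt m) 1) := by
          rw [frPt, ← Real.rpow_natCast (t ^ e⁻¹) (m + 1), ← Real.rpow_mul ht0.le]
          push_cast
          ring_nf
  calc ∫⁻ t in Ioi (0:ℝ), (volume.restrict (closedBall (0 : Pt m) 2)) {a : Pt m | t ≤ ‖a‖ ^ e}
      ≤ ∫⁻ t in Ioc (0:ℝ) 1 ∪ Ioi 1, (volume.restrict (closedBall (0 : Pt m) 2)) {a : Pt m | t ≤ ‖a‖ ^ e} :=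
        lintegral_mono_set Ioi_subset_Ioc_union_Ioi
    _ ≤ (∫⁻ t in Ioc (0:ℝ) 1, (volume.restrict (closedBall (0 : Pt m) 2)) {a : Pt m | t ≤ ‖a‖ ^ e})
        + ∫⁻ t in Ioi (1:ℝ), (volume.restrict (closedBall (0 : Pt m) 2)) {a : Pt m | t ≤ ‖a‖ ^ e} :=
        lintegral_union_le _ _ _
    _ < ⊤ := by
        refine ENNReal.add_lt_top.2 ⟨?_, ?_⟩
        · calc (∫⁻ t in Ioc (0:ℝ) 1, (volume.restrict (closedBall (0 : Pt m) 2)) {a : Pt m | t ≤ ‖a‖ ^ e})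
              ≤ ∫⁻ _t in Ioc (0:ℝ) 1, volume (closedBall (0 : Pt m) 2) :=
                lintegral_mono fun t => hbound t
            _ = volume (closedBall (0 : Pt m) 2) * volume (Ioc (0:ℝ) 1) := setLIntegral_const _ _
            _ < ⊤ := ENNReal.mul_lt_top measure_closedBall_lt_top (by simp)
        · calc (∫⁻ t in Ioi (1:ℝ), (volume.restrict (closedBall (0 : Pt m) 2)) {a : Pt m | t ≤ ‖a‖ ^ e})
              ≤ ∫⁻ t in Ioi (1:ℝ), ENNReal.ofReal (t ^ (e⁻¹ * (m + 1))) * volume (ball (0 : Pt m) 1) :=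
                setLIntegral_mono' measurableSet_Ioi key
            _ = (∫⁻ t in Ioi (1:ℝ), ENNReal.ofReal (t ^ (e⁻¹ * (m + 1)))) * volume (ball (0 : Pt m) 1) :=
                lintegral_mul_const' _ _ measure_ball_lt_top.ne
            _ < ⊤ := ENNReal.mul_lt_top
                ((integrableOn_Ioi_rpow_of_lt hq one_pos).setLIntegral_lt_top) measure_ball_lt_top

lemma box_int (m : ℕ) (e : ℝ) (he0 : e < 0) (hed : -((m:ℝ) + 1) < e) :
    ∃ C1 : ℝ, 0 < C1 ∧ ∀ x : Pt m, 0 < x.2 → x.2 < 1 →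
      (∫⁻ w in Dbox x.1 1 1, ENNReal.ofReal (nrm (x - w) ^ e)) ≤ ENNReal.ofReal C1 := by
  have hRB := rad_finite m e he0 hed
  set RB := ∫⁻ v in closedBall (0 : Pt m) 2, ENNReal.ofReal (‖v‖ ^ e) with hRBdef
  refine ⟨RB.toReal + 1, by positivity, ?_⟩
  intro x hx0 hx1
  have step1 : ∀ w : Pt m, ENNReal.ofReal (nrm (x - w) ^ e)
      ≤ ENNReal.ofReal (‖w - x‖ ^ e) := by
    intro w
    apply ENNReal.ofReal_le_ofReal
    have hsym : nrm (x - w) = nrm (w - x) := by rw [← nrm_neg (w - x), neg_sub]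
    rw [hsym]
    rcases eq_or_lt_of_le (norm_nonneg (w - x)) with h0 | hpos
    · have : w - x = 0 := by rwa [eq_comm, norm_eq_zero] at h0
      rw [this]
      have hz : nrm (0 : Pt m) = 0 := by simp [nrm]
      rw [hz]
      simp
    · exact Real.rpow_le_rpow_of_nonpos hpos (prodnorm_le_nrm (w - x)) he0.le
  have step2 : Dbox x.1 1 1 ⊆ (fun w : Pt m => w - x) ⁻¹' closedBall 0 2 := by
    intro w hw
    obtain ⟨hw1, hw2, hw3⟩ := hw
    simp only [Set.mem_preimage, mem_closedBall_zero_iff]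
    rw [Prod.norm_def]
    apply max_le
    · show ‖(w - x).1‖ ≤ 2
      rw [Prod.fst_sub]
      linarith
    · show ‖(w - x).2‖ ≤ 2
      rw [Prod.snd_sub, Real.norm_eq_abs, abs_le]
      constructor <;> linarith
  calc (∫⁻ w in Dbox x.1 1 1, ENNReal.ofReal (nrm (x - w) ^ e))
      ≤ ∫⁻ w in Dbox x.1 1 1, ENNReal.ofReal (‖w - x‖ ^ e) := lintegral_mono step1
    _ ≤ ∫⁻ w in (fun w : Pt m => w - x) ⁻¹' closedBall 0 2, ENNReal.ofReal (‖w - x‖ ^ e) :=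
        lintegral_mono' (Measure.restrict_mono step2 le_rfl) le_rfl
    _ = ∫⁻ v in closedBall (0 : Pt m) 2, ENNReal.ofReal (‖v‖ ^ e) :=
        (measurePreserving_sub_right volume x).setLIntegral_comp_preimage_emb
          (Homeomorph.subRight x).measurableEmbedding
          (fun v => ENNReal.ofReal (‖v‖ ^ e)) (closedBall 0 2)
    _ ≤ ENNReal.ofReal (RB.toReal + 1) := by
        rw [← hRBdef]
        calc RB = ENNReal.ofReal RB.toReal := (ENNReal.ofReal_toReal hRB.ne).symm
          _ ≤ ENNReal.ofReal (RB.toReal + 1) := ENNReal.ofReal_le_ofReal (by linarith)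

theorem stmt_6 (d : ℕ) (hd : 2 ≤ d) (α p β₁ β₂ β₃ β₄ : ℝ)
    (hα0 : 0 < α) (hα2 : α < 2)
    (hβ₁ : 0 ≤ β₁) (hβ₂ : 0 ≤ β₂) (hβ₃ : 0 ≤ β₃) (hβ₄ : 0 ≤ β₄)
    (h13 : 0 < β₃ → 0 < β₁) (h24 : 0 < β₄ → 0 < β₂)
    (hp1 : max (α - 1) 0 < p) (hp2 : p < α + (β₁ + min β₁ β₂) / 2) :
    ∃ C : ℝ, 0 < C ∧
      ∀ x y : Pt (d - 1), 0 < x.2 → x.2 < 1 / 4 → 0 < y.2 → y.2 < 1 / 4 →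
        3 < ‖x.1 - y.1‖ →
        (∫⁻ w in Dbox x.1 1 1, ∫⁻ z in Dbox y.1 1 1,
            ENNReal.ofReal
              ((min (x.2 / nrm (w - x)) 1) ^ p * (min (y.2 / nrm (z - y)) 1) ^ p *
                ((min w.2 z.2) ^ β₁ * (max w.2 z.2) ^ β₂ /
                  (nrm (x - w) ^ ((d : ℝ) - α) * nrm (y - z) ^ ((d : ℝ) - α))) *
                (Real.log (1 + max w.2 z.2 / min w.2 z.2)) ^ β₃ *
                (Real.log (1 + 8 / max w.2 z.2)) ^ β₄))
          ≤ ENNReal.ofReal (C * x.2 ^ p * y.2 ^ p) := by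
  have hd2 : (2:ℝ) ≤ (d:ℝ) := by exact_mod_cast hd
  have hp0 : 0 < p := lt_of_le_of_lt (le_max_right _ _) hp1
  have hminb : 0 ≤ min β₁ β₂ := le_min hβ₁ hβ₂
  set σ := (β₁ + min β₁ β₂) / 2 with hσdef
  have hσ0 : 0 ≤ σ := by rw [hσdef]; linarith
  have hpσ : p < α + σ := hp2
  set γ := min (max 0 ((p - α + σ) / 2)) p with hγdef
  have hγ0 : 0 ≤ γ := le_min (le_max_left _ _) hp0.le
  have hγp : γ ≤ p := min_le_right _ _
  have hγσcase : γ < σ ∨ γ = 0 := by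
    rcases le_or_gt σ 0 with h | h
    · right
      have hσz : σ = 0 := le_antisymm h hσ0
      have hneg : (p - α + σ) / 2 ≤ 0 := by linarith
      rw [hγdef, max_eq_left hneg, min_eq_left hp0.le]
    · left
      exact lt_of_le_of_lt (min_le_left _ _) (max_lt h (by linarith))
  have hpγ : p - α < γ := by
    rw [hγdef]
    exact lt_min (lt_of_lt_of_le (by linarith) (le_max_right _ _)) (by linarith)
  have hαd : α - (d:ℝ) < 0 := by linarith
  have he0 : γ + α - p - (d:ℝ) < 0 := by linarith
  have hdd : (0:ℝ) < (d:ℝ) - α := by linarith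
  have hm1 : ((d - 1 : ℕ) : ℝ) + 1 = (d:ℝ) := by
    have h1 : (1:ℕ) ≤ d := by omega
    rw [Nat.cast_sub h1]
    push_cast
    ring
  have hed : -(((d - 1 : ℕ):ℝ) + 1) < γ + α - p - (d:ℝ) := by rw [hm1]; linarith
  obtain ⟨CL, hCL0, hCL⟩ := decouple β₁ β₂ β₃ β₄ σ γ hβ₁ hβ₂ hβ₃ hβ₄ h13 h24 hσdef hγ0 hγσcase
  obtain ⟨C1, hC10, hC1⟩ := box_int (d - 1) (γ + α - p - (d:ℝ)) he0 hed
  have h2γ : (0:ℝ) < 2 ^ γ := Real.rpow_pos_of_pos two_pos γ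
  set K := CL * 2 ^ γ * 2 ^ γ with hKdef
  have hK0 : 0 < K := mul_pos (mul_pos hCL0 h2γ) h2γ
  refine ⟨K * C1 * C1, by positivity, ?_⟩
  intro x y hx0 hx4 hy0 hy4 _hxy
  have hx1 : x.2 < 1 := by linarith
  have hy1 : y.2 < 1 := by linarith
  -- the pointwise bound
  have key : ∀ w ∈ Dbox x.1 1 1, ∀ z ∈ Dbox y.1 1 1,
      (min (x.2 / nrm (w - x)) 1) ^ p * (min (y.2 / nrm (z - y)) 1) ^ p *
        ((min w.2 z.2) ^ β₁ * (max w.2 z.2) ^ β₂ /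
          (nrm (x - w) ^ ((d : ℝ) - α) * nrm (y - z) ^ ((d : ℝ) - α))) *
        (Real.log (1 + max w.2 z.2 / min w.2 z.2)) ^ β₃ *
        (Real.log (1 + 8 / max w.2 z.2)) ^ β₄
      ≤ K * (x.2 ^ p * y.2 ^ p) *
          (nrm (x - w) ^ (γ + α - p - (d:ℝ)) * nrm (y - z) ^ (γ + α - p - (d:ℝ))) := by
    intro w hw z hz
    obtain ⟨hw1, hw2, hw3⟩ : ‖w.1 - x.1‖ < 1 ∧ 0 < w.2 ∧ w.2 < 1 := hw
    obtain ⟨hz1, hz2, hz3⟩ : ‖z.1 - y.1‖ < 1 ∧ 0 < z.2 ∧ z.2 < 1 := hz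
    have hNx0 : 0 ≤ nrm (x - w) := nrm_nonneg _
    have hNy0 : 0 ≤ nrm (y - z) := nrm_nonneg _
    have hRHSnn : 0 ≤ K * (x.2 ^ p * y.2 ^ p) *
        (nrm (x - w) ^ (γ + α - p - (d:ℝ)) * nrm (y - z) ^ (γ + α - p - (d:ℝ))) :=
      mul_nonneg (mul_nonneg hK0.le (by positivity))
        (mul_nonneg (Real.rpow_nonneg hNx0 _) (Real.rpow_nonneg hNy0 _))
    rcases eq_or_lt_of_le hNx0 with hNx | hNx
    · have hz' : nrm (x - w) ^ ((d:ℝ) - α) = 0 := by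
        rw [← hNx, Real.zero_rpow hdd.ne']
      rw [hz', zero_mul, div_zero, mul_zero, zero_mul, zero_mul]
      exact hRHSnn
    rcases eq_or_lt_of_le hNy0 with hNy | hNy
    · have hz' : nrm (y - z) ^ ((d:ℝ) - α) = 0 := by
        rw [← hNy, Real.zero_rpow hdd.ne']
      rw [hz', mul_zero, div_zero, mul_zero, zero_mul, zero_mul]
      exact hRHSnn
    -- main case
    have hwx : nrm (w - x) = nrm (x - w) := by
      rw [show w - x = -(x - w) from (neg_sub x w).symm, nrm_neg]
    have hzy : nrm (z - y) = nrm (y - z) := by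
      rw [show z - y = -(y - z) from (neg_sub y z).symm, nrm_neg]
    have b1 : (min (x.2 / nrm (w - x)) 1) ^ p ≤ x.2 ^ p * max (nrm (x - w)) x.2 ^ (-p) := by
      rw [hwx]; exact key1 x.2 (nrm (x - w)) p hx0 hNx0 hp0
    have b2 : (min (y.2 / nrm (z - y)) 1) ^ p ≤ y.2 ^ p * max (nrm (y - z)) y.2 ^ (-p) := by
      rw [hzy]; exact key1 y.2 (nrm (y - z)) p hy0 hNy0 hp0
    have b3 : (min w.2 z.2) ^ β₁ * (max w.2 z.2) ^ β₂ *
        (Real.log (1 + max w.2 z.2 / min w.2 z.2)) ^ β₃ *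
        (Real.log (1 + 8 / max w.2 z.2)) ^ β₄ ≤ CL * (w.2 * z.2) ^ γ :=
      hCL w.2 z.2 hw2 hw3.le hz2 hz3.le
    have hwle : w.2 ≤ x.2 + nrm (x - w) := by
      have habs : |(x - w).2| ≤ nrm (x - w) := abs_snd_le_nrm _
      rw [Prod.snd_sub] at habs
      have h2 : w.2 - x.2 ≤ |w.2 - x.2| := le_abs_self _
      rw [abs_sub_comm] at h2
      linarith
    have hzle : z.2 ≤ y.2 + nrm (y - z) := by
      have habs : |(y - z).2| ≤ nrm (y - z) := abs_snd_le_nrm _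
      rw [Prod.snd_sub] at habs
      have h2 : z.2 - y.2 ≤ |z.2 - y.2| := le_abs_self _
      rw [abs_sub_comm] at h2
      linarith
    have k2x : w.2 ^ γ * max (nrm (x - w)) x.2 ^ (-p) * nrm (x - w) ^ (α - (d:ℝ))
        ≤ 2 ^ γ * nrm (x - w) ^ (γ + α - p - (d:ℝ)) :=
      key2 α p γ (d:ℝ) (nrm (x - w)) x.2 w.2 hγ0 hγp hx0 hw2 hw3.le hwle hNx0 hαd
    have k2y : z.2 ^ γ * max (nrm (y - z)) y.2 ^ (-p) * nrm (y - z) ^ (α - (d:ℝ))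
        ≤ 2 ^ γ * nrm (y - z) ^ (γ + α - p - (d:ℝ)) :=
      key2 α p γ (d:ℝ) (nrm (y - z)) y.2 z.2 hγ0 hγp hy0 hz2 hz3.le hzle hNy0 hαd
    have hinv1 : nrm (x - w) ^ (α - (d:ℝ)) = (nrm (x - w) ^ ((d:ℝ) - α))⁻¹ := by
      rw [show α - (d:ℝ) = -((d:ℝ) - α) from by ring]
      exact Real.rpow_neg hNx0 _
    have hinv2 : nrm (y - z) ^ (α - (d:ℝ)) = (nrm (y - z) ^ ((d:ℝ) - α))⁻¹ := by
      rw [show α - (d:ℝ) = -((d:ℝ) - α) from by ring]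
      exact Real.rpow_neg hNy0 _
    have hdiv : (min w.2 z.2) ^ β₁ * (max w.2 z.2) ^ β₂ /
        (nrm (x - w) ^ ((d : ℝ) - α) * nrm (y - z) ^ ((d : ℝ) - α))
        = (min w.2 z.2) ^ β₁ * (max w.2 z.2) ^ β₂ *
          nrm (x - w) ^ (α - (d:ℝ)) * nrm (y - z) ^ (α - (d:ℝ)) := by
      rw [hinv1, hinv2]
      ring
    have hT2nn : 0 ≤ (min (y.2 / nrm (z - y)) 1) ^ p :=
      Real.rpow_nonneg (le_min (div_nonneg hy0.le (nrm_nonneg _)) zero_le_one) _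
    have hb1nn : 0 ≤ x.2 ^ p * max (nrm (x - w)) x.2 ^ (-p) :=
      mul_nonneg (Real.rpow_nonneg hx0.le _) (Real.rpow_nonneg (le_trans hNx0 (le_max_left _ _)) _)
    have hb2nn : 0 ≤ y.2 ^ p * max (nrm (y - z)) y.2 ^ (-p) :=
      mul_nonneg (Real.rpow_nonneg hy0.le _) (Real.rpow_nonneg (le_trans hNy0 (le_max_left _ _)) _)
    have hL3nn : 0 ≤ Real.log (1 + max w.2 z.2 / min w.2 z.2) := by
      apply Real.log_nonneg
      have : 0 ≤ max w.2 z.2 / min w.2 z.2 :=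
        div_nonneg (le_trans hw2.le (le_max_left _ _)) (le_min hw2.le hz2.le)
      linarith
    have hL4nn : 0 ≤ Real.log (1 + 8 / max w.2 z.2) := by
      apply Real.log_nonneg
      have : 0 ≤ 8 / max w.2 z.2 := div_nonneg (by norm_num) (le_trans hw2.le (le_max_left _ _))
      linarith
    have hnumnn : 0 ≤ (min w.2 z.2) ^ β₁ * (max w.2 z.2) ^ β₂ *
        (Real.log (1 + max w.2 z.2 / min w.2 z.2)) ^ β₃ *
        (Real.log (1 + 8 / max w.2 z.2)) ^ β₄ :=
      mul_nonneg (mul_nonneg (mul_nonneg (Real.rpow_nonneg (le_min hw2.le hz2.le) _)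
        (Real.rpow_nonneg (le_trans hw2.le (le_max_left _ _)) _))
        (Real.rpow_nonneg hL3nn _)) (Real.rpow_nonneg hL4nn _)
    calc (min (x.2 / nrm (w - x)) 1) ^ p * (min (y.2 / nrm (z - y)) 1) ^ p *
        ((min w.2 z.2) ^ β₁ * (max w.2 z.2) ^ β₂ /
          (nrm (x - w) ^ ((d : ℝ) - α) * nrm (y - z) ^ ((d : ℝ) - α))) *
        (Real.log (1 + max w.2 z.2 / min w.2 z.2)) ^ β₃ *
        (Real.log (1 + 8 / max w.2 z.2)) ^ β₄
        = (min (x.2 / nrm (w - x)) 1) ^ p * (min (y.2 / nrm (z - y)) 1) ^ p *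
          ((min w.2 z.2) ^ β₁ * (max w.2 z.2) ^ β₂ *
            (Real.log (1 + max w.2 z.2 / min w.2 z.2)) ^ β₃ *
            (Real.log (1 + 8 / max w.2 z.2)) ^ β₄) *
          nrm (x - w) ^ (α - (d:ℝ)) * nrm (y - z) ^ (α - (d:ℝ)) := by
          rw [hdiv]; ring
      _ ≤ (x.2 ^ p * max (nrm (x - w)) x.2 ^ (-p)) * (y.2 ^ p * max (nrm (y - z)) y.2 ^ (-p)) *
          (CL * (w.2 * z.2) ^ γ) * nrm (x - w) ^ (α - (d:ℝ)) * nrm (y - z) ^ (α - (d:ℝ)) := by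
          apply mul_le_mul_of_nonneg_right _ (Real.rpow_nonneg hNy0 _)
          apply mul_le_mul_of_nonneg_right _ (Real.rpow_nonneg hNx0 _)
          apply mul_le_mul
          · exact mul_le_mul b1 b2 hT2nn hb1nn
          · exact b3
          · exact hnumnn
          · exact mul_nonneg hb1nn hb2nn
      _ = CL * (x.2 ^ p * y.2 ^ p) *
          ((w.2 ^ γ * max (nrm (x - w)) x.2 ^ (-p) * nrm (x - w) ^ (α - (d:ℝ))) *
           (z.2 ^ γ * max (nrm (y - z)) y.2 ^ (-p) * nrm (y - z) ^ (α - (d:ℝ)))) := by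
          rw [Real.mul_rpow hw2.le hz2.le]
          ring
      _ ≤ CL * (x.2 ^ p * y.2 ^ p) *
          ((2 ^ γ * nrm (x - w) ^ (γ + α - p - (d:ℝ))) *
           (2 ^ γ * nrm (y - z) ^ (γ + α - p - (d:ℝ)))) := by
          apply mul_le_mul_of_nonneg_left _ (mul_nonneg hCL0.le (by positivity))
          apply mul_le_mul k2x k2y _ _
          · exact mul_nonneg (mul_nonneg (Real.rpow_nonneg hz2.le _)
              (Real.rpow_nonneg (le_trans hNy0 (le_max_left _ _)) _)) (Real.rpow_nonneg hNy0 _)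
          · exact mul_nonneg h2γ.le (Real.rpow_nonneg hNx0 _)
      _ = K * (x.2 ^ p * y.2 ^ p) *
          (nrm (x - w) ^ (γ + α - p - (d:ℝ)) * nrm (y - z) ^ (γ + α - p - (d:ℝ))) := by
          rw [hKdef]; ring
  -- now integrate
  have hDx : MeasurableSet (Dbox x.1 1 1) := measurableSet_Dbox x.1 1 1
  have hDy : MeasurableSet (Dbox y.1 1 1) := measurableSet_Dbox y.1 1 1
  have hIy : (∫⁻ z in Dbox y.1 1 1, ENNReal.ofReal (nrm (y - z) ^ (γ + α - p - (d:ℝ))))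
      ≤ ENNReal.ofReal C1 := hC1 y hy0 hy1
  have hIx : (∫⁻ w in Dbox x.1 1 1, ENNReal.ofReal (nrm (x - w) ^ (γ + α - p - (d:ℝ))))
      ≤ ENNReal.ofReal C1 := hC1 x hx0 hx1
  have hcst : 0 ≤ K * (x.2 ^ p * y.2 ^ p) := mul_nonneg hK0.le (by positivity)
  calc (∫⁻ w in Dbox x.1 1 1, ∫⁻ z in Dbox y.1 1 1,
        ENNReal.ofReal
          ((min (x.2 / nrm (w - x)) 1) ^ p * (min (y.2 / nrm (z - y)) 1) ^ p *
            ((min w.2 z.2) ^ β₁ * (max w.2 z.2) ^ β₂ /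
              (nrm (x - w) ^ ((d : ℝ) - α) * nrm (y - z) ^ ((d : ℝ) - α))) *
            (Real.log (1 + max w.2 z.2 / min w.2 z.2)) ^ β₃ *
            (Real.log (1 + 8 / max w.2 z.2)) ^ β₄))
      ≤ ∫⁻ w in Dbox x.1 1 1, ∫⁻ z in Dbox y.1 1 1,
          ENNReal.ofReal (K * (x.2 ^ p * y.2 ^ p) *
            (nrm (x - w) ^ (γ + α - p - (d:ℝ)) * nrm (y - z) ^ (γ + α - p - (d:ℝ)))) := by
        apply setLIntegral_mono' hDx
        intro w hw
        apply setLIntegral_mono' hDy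
        intro z hz
        exact ENNReal.ofReal_le_ofReal (key w hw z hz)
    _ = ∫⁻ w in Dbox x.1 1 1,
          (ENNReal.ofReal (K * (x.2 ^ p * y.2 ^ p) * nrm (x - w) ^ (γ + α - p - (d:ℝ))) *
            ∫⁻ z in Dbox y.1 1 1, ENNReal.ofReal (nrm (y - z) ^ (γ + α - p - (d:ℝ)))) := by
        apply lintegral_congr
        intro w
        rw [← lintegral_const_mul' _ _ ENNReal.ofReal_ne_top]
        apply lintegral_congr
        intro z
        rw [← ENNReal.ofReal_mul (mul_nonneg hcst (Real.rpow_nonneg (nrm_nonneg _) _))]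
        congr 1
        ring
    _ ≤ ∫⁻ w in Dbox x.1 1 1,
          (ENNReal.ofReal (K * (x.2 ^ p * y.2 ^ p) * nrm (x - w) ^ (γ + α - p - (d:ℝ))) *
            ENNReal.ofReal C1) := by
        apply lintegral_mono
        intro w
        exact mul_le_mul_right hIy _
    _ = (∫⁻ w in Dbox x.1 1 1,
          ENNReal.ofReal (K * (x.2 ^ p * y.2 ^ p) * nrm (x - w) ^ (γ + α - p - (d:ℝ))))
          * ENNReal.ofReal C1 := lintegral_mul_const' _ _ ENNReal.ofReal_ne_top
    _ = (ENNReal.ofReal (K * (x.2 ^ p * y.2 ^ p)) *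
          ∫⁻ w in Dbox x.1 1 1, ENNReal.ofReal (nrm (x - w) ^ (γ + α - p - (d:ℝ))))
          * ENNReal.ofReal C1 := by
        congr 1
        rw [← lintegral_const_mul' _ _ ENNReal.ofReal_ne_top]
        apply lintegral_congr
        intro w
        rw [← ENNReal.ofReal_mul hcst]
    _ ≤ (ENNReal.ofReal (K * (x.2 ^ p * y.2 ^ p)) * ENNReal.ofReal C1) * ENNReal.ofReal C1 := by
        apply mul_le_mul_left
        exact mul_le_mul_right hIx _
    _ = ENNReal.ofReal (K * (x.2 ^ p * y.2 ^ p) * C1 * C1) := by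
        rw [ENNReal.ofReal_mul (mul_nonneg hcst hC10.le), ENNReal.ofReal_mul hcst]
    _ ≤ ENNReal.ofReal (K * C1 * C1 * x.2 ^ p * y.2 ^ p) := by
        apply ENNReal.ofReal_le_ofReal
        apply le_of_eq
        ring


end
end

section
/- Let 0 < α < 2 and β₁, β₂ ≥ 0. There exist constants c₂, c₃ > 0, depending only on α, β₁, β₂, such that c₂ (R/r)^α ≤ Φ(R)/Φ(r) ≤ c₃ (R/r)^{β̄} for all 0 < r ≤ R < ∞. -/
open MeasureTheory Real

noncomputable section

/-- `φ(r) = r^α` for `0 < r < 1` and `φ(r) = r^{α+β₁+β₂}` for `r ≥ 1`. -/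
noncomputable def phi (α β₁ β₂ r : ℝ) : ℝ :=
  if r < 1 then r ^ α else r ^ (α + β₁ + β₂)

/-- `Φ(r) = r² / ∫₀^r (s/φ(s)) ds`. -/
noncomputable def Phi (α β₁ β₂ r : ℝ) : ℝ :=
  r ^ 2 / ∫ s in (0 : ℝ)..r, s / phi α β₁ β₂ s

section Aux
open Set intervalIntegral
variable (α β₁ β₂ : ℝ)

lemma phi_div_le_one {s : ℝ} (hs : 0 < s) (hs1 : s ≤ 1) :
    s / phi α β₁ β₂ s = s ^ (1 - α) := by
  unfold phi
  rcases lt_or_eq_of_le hs1 with h | h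
  · rw [if_pos h, Real.rpow_sub hs, Real.rpow_one]
  · subst h
    simp

lemma phi_div_one_le {s : ℝ} (hs : 1 ≤ s) :
    s / phi α β₁ β₂ s = s ^ (1 - (α + β₁ + β₂)) := by
  unfold phi
  rw [if_neg (not_lt.2 hs), Real.rpow_sub (lt_of_lt_of_le one_pos hs), Real.rpow_one]

lemma phi_div_nonneg {s : ℝ} (hs : 0 ≤ s) : 0 ≤ s / phi α β₁ β₂ s := by
  apply div_nonneg hs
  unfold phi
  split <;> exact Real.rpow_nonneg hs _

lemma intInt_le_one (hα2 : α < 2) {r : ℝ} (hr : 0 ≤ r) (hr1 : r ≤ 1) :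
    IntervalIntegrable (fun s => s / phi α β₁ β₂ s) volume 0 r := by
  have h1 : IntervalIntegrable (fun s : ℝ => s ^ (1 - α)) volume 0 r :=
    intervalIntegrable_rpow' (by linarith)
  rw [intervalIntegrable_iff_integrableOn_Ioc_of_le hr] at h1 ⊢
  refine h1.congr_fun (fun s hs => ?_) measurableSet_Ioc
  exact (phi_div_le_one α β₁ β₂ hs.1 (hs.2.trans hr1)).symm

lemma intInt_one_le {a b : ℝ} (ha : 1 ≤ a) (hab : a ≤ b) :
    IntervalIntegrable (fun s => s / phi α β₁ β₂ s) volume a b := by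
  have h1 : IntervalIntegrable (fun s : ℝ => s ^ (1 - (α + β₁ + β₂))) volume a b := by
    apply intervalIntegrable_rpow (Or.inr ?_)
    rw [Set.uIcc_of_le hab]
    intro h
    linarith [h.1]
  rw [intervalIntegrable_iff_integrableOn_Ioc_of_le hab] at h1 ⊢
  refine h1.congr_fun (fun s hs => ?_) measurableSet_Ioc
  exact (phi_div_one_le α β₁ β₂ (ha.trans hs.1.le)).symm

lemma intInt (hα2 : α < 2) {a b : ℝ} (ha : 0 ≤ a) (hab : a ≤ b) :
    IntervalIntegrable (fun s => s / phi α β₁ β₂ s) volume a b := by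
  have h0b : IntervalIntegrable (fun s => s / phi α β₁ β₂ s) volume 0 b := by
    rcases le_total b 1 with h | h
    · exact intInt_le_one α β₁ β₂ hα2 (ha.trans hab) h
    · exact (intInt_le_one α β₁ β₂ hα2 zero_le_one le_rfl).trans
        (intInt_one_le α β₁ β₂ le_rfl h)
  refine h0b.mono_set ?_
  rw [Set.uIcc_of_le hab, Set.uIcc_of_le (ha.trans hab)]
  exact Set.Icc_subset_Icc ha le_rfl

lemma I_eq_le_one (hα2 : α < 2) {r : ℝ} (hr : 0 ≤ r) (hr1 : r ≤ 1) :
    (∫ s in (0:ℝ)..r, s / phi α β₁ β₂ s) = r ^ (2 - α) / (2 - α) := by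
  have e1 : (∫ s in (0:ℝ)..r, s / phi α β₁ β₂ s) = ∫ s in (0:ℝ)..r, s ^ (1 - α) := by
    apply intervalIntegral.integral_congr_ae
    filter_upwards with s hs
    rw [Set.uIoc_of_le hr] at hs
    exact phi_div_le_one α β₁ β₂ hs.1 (hs.2.trans hr1)
  rw [e1, integral_rpow (Or.inl (by linarith : (-1:ℝ) < 1 - α))]
  rw [Real.zero_rpow (by intro h; linarith [h] : (1:ℝ) - α + 1 ≠ 0)]
  rw [show (1:ℝ) - α + 1 = 2 - α by ring]
  ring

lemma integral_phi_one_le {a b : ℝ} (ha : 1 ≤ a) (hab : a ≤ b) :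
    (∫ s in a..b, s / phi α β₁ β₂ s) = ∫ s in a..b, s ^ (1 - (α + β₁ + β₂)) := by
  apply intervalIntegral.integral_congr_ae
  filter_upwards with s hs
  rw [Set.uIoc_of_le hab] at hs
  exact phi_div_one_le α β₁ β₂ (ha.trans hs.1.le)

lemma I_split (hα2 : α < 2) {a b : ℝ} (ha : 0 ≤ a) (hab : a ≤ b) :
    (∫ s in (0:ℝ)..b, s / phi α β₁ β₂ s)
      = (∫ s in (0:ℝ)..a, s / phi α β₁ β₂ s) + ∫ s in a..b, s / phi α β₁ β₂ s :=
  (intervalIntegral.integral_add_adjacent_intervals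
    (intInt α β₁ β₂ hα2 le_rfl ha) (intInt α β₁ β₂ hα2 ha hab)).symm

lemma I_mono (hα2 : α < 2) {a b : ℝ} (ha : 0 ≤ a) (hab : a ≤ b) :
    (∫ s in (0:ℝ)..a, s / phi α β₁ β₂ s) ≤ ∫ s in (0:ℝ)..b, s / phi α β₁ β₂ s := by
  rw [I_split α β₁ β₂ hα2 ha hab]
  have : 0 ≤ ∫ s in a..b, s / phi α β₁ β₂ s :=
    intervalIntegral.integral_nonneg hab (fun u hu => phi_div_nonneg α β₁ β₂ (ha.trans hu.1))
  linarith

lemma I_pos (hα2 : α < 2) {r : ℝ} (hr : 0 < r) :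
    0 < ∫ s in (0:ℝ)..r, s / phi α β₁ β₂ s := by
  rcases le_total r 1 with h | h
  · rw [I_eq_le_one α β₁ β₂ hα2 hr.le h]
    exact div_pos (Real.rpow_pos_of_pos hr _) (by linarith)
  · calc (0:ℝ) < 1 ^ (2-α) / (2-α) := by
          rw [Real.one_rpow]; exact div_pos one_pos (by linarith)
      _ = ∫ s in (0:ℝ)..(1:ℝ), s / phi α β₁ β₂ s :=
          (I_eq_le_one α β₁ β₂ hα2 zero_le_one le_rfl).symm
      _ ≤ _ := I_mono α β₁ β₂ hα2 zero_le_one h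

lemma I_one (hα2 : α < 2) :
    (∫ s in (0:ℝ)..(1:ℝ), s / phi α β₁ β₂ s) = 1 / (2 - α) := by
  rw [I_eq_le_one α β₁ β₂ hα2 zero_le_one le_rfl, Real.one_rpow]

-- F1 : lower bound for I on [1,∞)
lemma I_lower (hα2 : α < 2) (hβ : 0 ≤ β₁ + β₂) {r : ℝ} (hr : 1 ≤ r) :
    r ^ (2 - (α + β₁ + β₂)) / (2 - α) ≤ ∫ s in (0:ℝ)..r, s / phi α β₁ β₂ s := by
  set γ := α + β₁ + β₂ with hγdef
  have hr0 : (0:ℝ) < r := lt_of_lt_of_le one_pos hr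
  have h2α : (0:ℝ) < 2 - α := by linarith
  rw [I_split α β₁ β₂ hα2 zero_le_one hr, I_one α β₁ β₂ hα2,
    integral_phi_one_le α β₁ β₂ le_rfl hr]
  have hmono : (∫ s in (1:ℝ)..r, r ^ (α - γ) * s ^ (1 - α))
      ≤ ∫ s in (1:ℝ)..r, s ^ (1 - γ) := by
    apply intervalIntegral.integral_mono_on hr
    · exact (intervalIntegrable_rpow' (by linarith)).const_mul _
    · apply intervalIntegrable_rpow (Or.inr ?_)
      rw [Set.uIcc_of_le hr]; intro h; linarith [h.1]
    · intro s hs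
      have hs0 : (0:ℝ) < s := lt_of_lt_of_le one_pos hs.1
      have h1 : r ^ (α - γ) ≤ s ^ (α - γ) :=
        Real.rpow_le_rpow_of_nonpos hs0 hs.2 (by linarith)
      calc r ^ (α - γ) * s ^ (1 - α) ≤ s ^ (α - γ) * s ^ (1 - α) :=
            mul_le_mul_of_nonneg_right h1 (Real.rpow_nonneg hs0.le _)
        _ = s ^ (1 - γ) := by
            rw [← Real.rpow_add hs0]; ring_nf
  have hval : (∫ s in (1:ℝ)..r, r ^ (α - γ) * s ^ (1 - α))
      = r ^ (α - γ) * ((r ^ (2 - α) - 1) / (2 - α)) := by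
    rw [intervalIntegral.integral_const_mul,
      integral_rpow (Or.inl (by linarith : (-1:ℝ) < 1 - α)), Real.one_rpow,
      show (1:ℝ) - α + 1 = 2 - α by ring]
  have hprod : r ^ (α - γ) * r ^ (2 - α) = r ^ (2 - γ) := by
    rw [← Real.rpow_add hr0]; ring_nf
  have hle1 : r ^ (α - γ) ≤ 1 :=
    Real.rpow_le_one_of_one_le_of_nonpos hr (by simp only [hγdef]; linarith)
  have hexp : r ^ (α - γ) * ((r ^ (2 - α) - 1) / (2 - α))
      = (r ^ (2 - γ) - r ^ (α - γ)) / (2 - α) := by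
    rw [mul_div_assoc', mul_sub, hprod, mul_one]
  rw [hexp] at hval
  show r ^ (2 - γ) / (2 - α) ≤ 1 / (2 - α) + ∫ s in (1:ℝ)..r, s ^ (1 - γ)
  have h2 : (r ^ (2 - γ) - r ^ (α - γ)) / (2 - α) ≤ ∫ s in (1:ℝ)..r, s ^ (1 - γ) :=
    hval ▸ hmono
  have key : r ^ (2 - γ) / (2 - α) ≤ 1 / (2 - α) + (r ^ (2 - γ) - r ^ (α - γ)) / (2 - α) := by
    rw [← add_div]
    exact (div_le_div_iff_of_pos_right h2α).mpr (by linarith)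
  linarith

-- F2 : upper bound for I on [1,∞) when γ < 2
lemma I_upper_lt_two (hα2 : α < 2) (hγ2 : α + β₁ + β₂ < 2) {r : ℝ} (hr : 1 ≤ r) :
    (∫ s in (0:ℝ)..r, s / phi α β₁ β₂ s)
      ≤ r ^ (2 - (α + β₁ + β₂)) * (1 / (2 - α) + 1 / (2 - (α + β₁ + β₂))) := by
  set γ := α + β₁ + β₂ with hγdef
  have h2α : (0:ℝ) < 2 - α := by linarith
  have h2γ : (0:ℝ) < 2 - γ := by linarith
  rw [I_split α β₁ β₂ hα2 zero_le_one hr, I_one α β₁ β₂ hα2,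
    integral_phi_one_le α β₁ β₂ le_rfl hr]
  show 1 / (2 - α) + (∫ s in (1:ℝ)..r, s ^ (1 - γ)) ≤ _
  rw [integral_rpow (Or.inl (by linarith : (-1:ℝ) < 1 - γ)), Real.one_rpow,
    show (1:ℝ) - γ + 1 = 2 - γ by ring]
  have hA : (1:ℝ) ≤ r ^ (2 - γ) := Real.one_le_rpow hr (by linarith)
  have h1 : 1 / (2 - α) ≤ r ^ (2 - γ) / (2 - α) := div_le_div_of_nonneg_right hA h2α.le
  have h2 : (r ^ (2 - γ) - 1) / (2 - γ) ≤ r ^ (2 - γ) / (2 - γ) :=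
    div_le_div_of_nonneg_right (by linarith) h2γ.le
  have h3 : r ^ (2 - γ) * (1 / (2 - α) + 1 / (2 - γ))
      = r ^ (2 - γ) / (2 - α) + r ^ (2 - γ) / (2 - γ) := by ring
  linarith

lemma upper_I_core (hα2 : α < 2) (hβ : 0 ≤ β₁ + β₂) {r R : ℝ} (hr : 1 ≤ r) (hrR : r ≤ R) :
    (∫ s in (0:ℝ)..R, s / phi α β₁ β₂ s)
      ≤ 2 * (R / r) ^ (2 - α) * ∫ s in (0:ℝ)..r, s / phi α β₁ β₂ s := by
  set γ := α + β₁ + β₂ with hγdef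
  have hr0 : (0:ℝ) < r := lt_of_lt_of_le one_pos hr
  have hR0 : (0:ℝ) < R := lt_of_lt_of_le hr0 hrR
  have h2α : (0:ℝ) < 2 - α := by linarith
  have ht1 : (1:ℝ) ≤ R / r := (one_le_div hr0).2 hrR
  have hT0 : (0:ℝ) ≤ (R / r) ^ (2 - α) := Real.rpow_nonneg (by positivity) _
  have hT1 : (1:ℝ) ≤ (R / r) ^ (2 - α) := Real.one_le_rpow ht1 (by linarith)
  have hIr_pos : 0 < ∫ s in (0:ℝ)..r, s / phi α β₁ β₂ s := I_pos α β₁ β₂ hα2 hr0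
  rw [I_split α β₁ β₂ hα2 hr0.le hrR, integral_phi_one_le α β₁ β₂ hr hrR]
  have hmono : (∫ s in r..R, s ^ (1 - γ)) ≤ ∫ s in r..R, r ^ (α - γ) * s ^ (1 - α) := by
    apply intervalIntegral.integral_mono_on hrR
    · apply intervalIntegrable_rpow (Or.inr ?_)
      rw [Set.uIcc_of_le hrR]; intro h; linarith [h.1]
    · exact (intervalIntegrable_rpow' (by linarith)).const_mul _
    · intro s hs
      have hs0 : (0:ℝ) < s := lt_of_lt_of_le hr0 hs.1
      have h1 : s ^ (α - γ) ≤ r ^ (α - γ) :=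
        Real.rpow_le_rpow_of_nonpos hr0 hs.1 (by simp only [hγdef]; linarith)
      calc s ^ (1 - γ) = s ^ (α - γ) * s ^ (1 - α) := by rw [← Real.rpow_add hs0]; ring_nf
        _ ≤ r ^ (α - γ) * s ^ (1 - α) :=
            mul_le_mul_of_nonneg_right h1 (Real.rpow_nonneg hs0.le _)
  have hval : (∫ s in r..R, r ^ (α - γ) * s ^ (1 - α))
      = r ^ (α - γ) * ((R ^ (2 - α) - r ^ (2 - α)) / (2 - α)) := by
    rw [intervalIntegral.integral_const_mul,
      integral_rpow (Or.inl (by linarith : (-1:ℝ) < 1 - α)),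
      show (1:ℝ) - α + 1 = 2 - α by ring]
  have hprod : r ^ (α - γ) * r ^ (2 - α) = r ^ (2 - γ) := by
    rw [← Real.rpow_add hr0]; ring_nf
  have hrcne : r ^ (2 - α) ≠ 0 := (Real.rpow_pos_of_pos hr0 _).ne'
  have e1 : (R / r) ^ (2 - α) * (r ^ (2 - γ) / (2 - α))
      = r ^ (α - γ) * (R ^ (2 - α) / (2 - α)) := by
    rw [Real.div_rpow hR0.le hr0.le, ← hprod]
    field_simp
  have hstep : r ^ (α - γ) * ((R ^ (2 - α) - r ^ (2 - α)) / (2 - α))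
      ≤ (R / r) ^ (2 - α) * (r ^ (2 - γ) / (2 - α)) := by
    rw [e1]
    apply mul_le_mul_of_nonneg_left ?_ (Real.rpow_nonneg hr0.le _)
    apply div_le_div_of_nonneg_right ?_ h2α.le |>.trans_eq rfl
    linarith [Real.rpow_nonneg hr0.le (2 - α)]
  have hF1 : r ^ (2 - γ) / (2 - α) ≤ ∫ s in (0:ℝ)..r, s / phi α β₁ β₂ s :=
    I_lower α β₁ β₂ hα2 hβ hr
  have htail : (∫ s in r..R, s ^ (1 - γ))
      ≤ (R / r) ^ (2 - α) * ∫ s in (0:ℝ)..r, s / phi α β₁ β₂ s := by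
    calc (∫ s in r..R, s ^ (1 - γ)) ≤ ∫ s in r..R, r ^ (α - γ) * s ^ (1 - α) := hmono
      _ = r ^ (α - γ) * ((R ^ (2 - α) - r ^ (2 - α)) / (2 - α)) := hval
      _ ≤ (R / r) ^ (2 - α) * (r ^ (2 - γ) / (2 - α)) := hstep
      _ ≤ (R / r) ^ (2 - α) * ∫ s in (0:ℝ)..r, s / phi α β₁ β₂ s :=
          mul_le_mul_of_nonneg_left hF1 hT0
  have hhead : (∫ s in (0:ℝ)..r, s / phi α β₁ β₂ s)
      ≤ (R / r) ^ (2 - α) * ∫ s in (0:ℝ)..r, s / phi α β₁ β₂ s :=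
    le_mul_of_one_le_left hIr_pos.le hT1
  linarith

lemma I_ratio_upper (hα2 : α < 2) (hβ : 0 ≤ β₁ + β₂) {r R : ℝ} (hr0 : 0 < r) (hrR : r ≤ R) :
    (∫ s in (0:ℝ)..R, s / phi α β₁ β₂ s)
      ≤ 2 * (R / r) ^ (2 - α) * ∫ s in (0:ℝ)..r, s / phi α β₁ β₂ s := by
  have hR0 : (0:ℝ) < R := lt_of_lt_of_le hr0 hrR
  have h2α : (0:ℝ) < 2 - α := by linarith
  have hrcpos : (0:ℝ) < r ^ (2 - α) := Real.rpow_pos_of_pos hr0 _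
  rcases le_total R 1 with hR1 | hR1
  · rw [I_eq_le_one α β₁ β₂ hα2 hR0.le hR1, I_eq_le_one α β₁ β₂ hα2 hr0.le (hrR.trans hR1)]
    have hc : (R / r) ^ (2 - α) * r ^ (2 - α) = R ^ (2 - α) := by
      rw [Real.div_rpow hR0.le hr0.le, div_mul_cancel₀ _ hrcpos.ne']
    have hRc : (0:ℝ) ≤ R ^ (2 - α) / (2 - α) := by positivity
    calc R ^ (2 - α) / (2 - α) ≤ 2 * (R ^ (2 - α) / (2 - α)) := by linarith
      _ = 2 * (R / r) ^ (2 - α) * (r ^ (2 - α) / (2 - α)) := by rw [← hc]; ring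
  · rcases le_total 1 r with hr1 | hr1
    · exact upper_I_core α β₁ β₂ hα2 hβ hr1 hrR
    · have hcore := upper_I_core α β₁ β₂ hα2 hβ le_rfl hR1
      rw [div_one, I_one α β₁ β₂ hα2] at hcore
      rw [I_eq_le_one α β₁ β₂ hα2 hr0.le hr1]
      have e : 2 * (R / r) ^ (2 - α) * (r ^ (2 - α) / (2 - α))
          = 2 * R ^ (2 - α) * (1 / (2 - α)) := by
        rw [Real.div_rpow hR0.le hr0.le]
        field_simp
      rw [e]
      exact hcore

lemma I_ratio_lower (hα0 : 0 < α) (hα2 : α < 2) (hβ₁ : 0 ≤ β₁) (hβ₂ : 0 ≤ β₂) :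
    ∃ K : ℝ, 1 ≤ K ∧ ∀ r R : ℝ, 0 < r → r ≤ R →
      (R / r) ^ (2 - min (α + β₁ + β₂) 2) * (∫ s in (0:ℝ)..r, s / phi α β₁ β₂ s)
        ≤ K * ∫ s in (0:ℝ)..R, s / phi α β₁ β₂ s := by
  have hβ : 0 ≤ β₁ + β₂ := by linarith
  set γ := α + β₁ + β₂ with hγdef
  have h2α : (0:ℝ) < 2 - α := by linarith
  rcases le_or_gt 2 γ with hγ2 | hγ2
  · refine ⟨1, le_rfl, fun r R hr0 hrR => ?_⟩
    rw [min_eq_right hγ2, sub_self, Real.rpow_zero, one_mul, one_mul]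
    exact I_mono α β₁ β₂ hα2 hr0.le hrR
  · have h2γ : (0:ℝ) < 2 - γ := by linarith
    refine ⟨1 + (2 - α) / (2 - γ), le_add_of_nonneg_right (by positivity),
      fun r R hr0 hrR => ?_⟩
    have hK1 : (1:ℝ) ≤ 1 + (2 - α) / (2 - γ) := le_add_of_nonneg_right (by positivity)
    have hR0 : (0:ℝ) < R := lt_of_lt_of_le hr0 hrR
    rw [min_eq_left hγ2.le]
    have hαγ : α ≤ γ := by simp only [hγdef]; linarith
    rcases le_total R 1 with hR1 | hR1
    · rw [I_eq_le_one α β₁ β₂ hα2 hR0.le hR1, I_eq_le_one α β₁ β₂ hα2 hr0.le (hrR.trans hR1)]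
      have ht1 : (1:ℝ) ≤ R / r := (one_le_div hr0).2 hrR
      have h1 : (R / r) ^ (2 - γ) ≤ (R / r) ^ (2 - α) :=
        Real.rpow_le_rpow_of_exponent_le ht1 (by linarith)
      have e : (R / r) ^ (2 - α) * (r ^ (2 - α) / (2 - α)) = R ^ (2 - α) / (2 - α) := by
        rw [Real.div_rpow hR0.le hr0.le]
        field_simp
      calc (R / r) ^ (2 - γ) * (r ^ (2 - α) / (2 - α))
          ≤ (R / r) ^ (2 - α) * (r ^ (2 - α) / (2 - α)) :=
            mul_le_mul_of_nonneg_right h1 (by positivity)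
        _ = R ^ (2 - α) / (2 - α) := e
        _ ≤ (1 + (2 - α) / (2 - γ)) * (R ^ (2 - α) / (2 - α)) :=
            le_mul_of_one_le_left (by positivity) hK1
    · rcases le_total 1 r with hr1 | hr1
      · have hF2 := I_upper_lt_two α β₁ β₂ hα2 (by simpa [hγdef] using hγ2) hr1
        have hF1 := I_lower α β₁ β₂ hα2 hβ (hr1.trans hrR)
        have hT : (0:ℝ) ≤ (R / r) ^ (2 - γ) := Real.rpow_nonneg (by positivity) _
        have hrbne : r ^ (2 - γ) ≠ 0 := (Real.rpow_pos_of_pos hr0 _).ne'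
        have e : (R / r) ^ (2 - γ) * (r ^ (2 - γ) * (1 / (2 - α) + 1 / (2 - γ)))
            = R ^ (2 - γ) * (1 / (2 - α) + 1 / (2 - γ)) := by
          rw [Real.div_rpow hR0.le hr0.le]
          field_simp
        have e2 : (1 + (2 - α) / (2 - γ)) * (R ^ (2 - γ) / (2 - α))
            = R ^ (2 - γ) * (1 / (2 - α) + 1 / (2 - γ)) := by
          field_simp
        calc (R / r) ^ (2 - γ) * (∫ s in (0:ℝ)..r, s / phi α β₁ β₂ s)
            ≤ (R / r) ^ (2 - γ) * (r ^ (2 - γ) * (1 / (2 - α) + 1 / (2 - γ))) :=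
              mul_le_mul_of_nonneg_left hF2 hT
          _ = R ^ (2 - γ) * (1 / (2 - α) + 1 / (2 - γ)) := e
          _ = (1 + (2 - α) / (2 - γ)) * (R ^ (2 - γ) / (2 - α)) := e2.symm
          _ ≤ (1 + (2 - α) / (2 - γ)) * ∫ s in (0:ℝ)..R, s / phi α β₁ β₂ s :=
              mul_le_mul_of_nonneg_left hF1 (by positivity)
      · rw [I_eq_le_one α β₁ β₂ hα2 hr0.le hr1]
        have hF1 := I_lower α β₁ β₂ hα2 hβ hR1
        have h1 : r ^ (2 - α) ≤ r ^ (2 - γ) :=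
          Real.rpow_le_rpow_of_exponent_ge hr0 hr1 (by linarith)
        have e : (R / r) ^ (2 - γ) * (r ^ (2 - γ) / (2 - α)) = R ^ (2 - γ) / (2 - α) := by
          rw [Real.div_rpow hR0.le hr0.le]
          field_simp
        calc (R / r) ^ (2 - γ) * (r ^ (2 - α) / (2 - α))
            ≤ (R / r) ^ (2 - γ) * (r ^ (2 - γ) / (2 - α)) := by
              apply mul_le_mul_of_nonneg_left (div_le_div_of_nonneg_right h1 h2α.le)
              exact Real.rpow_nonneg (by positivity) _
          _ = R ^ (2 - γ) / (2 - α) := e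
          _ ≤ ∫ s in (0:ℝ)..R, s / phi α β₁ β₂ s := hF1
          _ ≤ (1 + (2 - α) / (2 - γ)) * ∫ s in (0:ℝ)..R, s / phi α β₁ β₂ s :=
              le_mul_of_one_le_left (I_pos α β₁ β₂ hα2 hR0).le hK1
end Aux

open Set intervalIntegral in
theorem stmt_11 (α β₁ β₂ : ℝ) (hα0 : 0 < α) (hα2 : α < 2)
    (hβ₁ : 0 ≤ β₁) (hβ₂ : 0 ≤ β₂) :
    ∃ c₂ c₃ : ℝ, 0 < c₂ ∧ 0 < c₃ ∧
      ∀ r R : ℝ, 0 < r → r ≤ R →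
        c₂ * (R / r) ^ α ≤ Phi α β₁ β₂ R / Phi α β₁ β₂ r ∧
        Phi α β₁ β₂ R / Phi α β₁ β₂ r ≤ c₃ * (R / r) ^ (min (α + β₁ + β₂) 2) := by
  obtain ⟨K, hK1, hK⟩ := I_ratio_lower α β₁ β₂ hα0 hα2 hβ₁ hβ₂
  have hβ : 0 ≤ β₁ + β₂ := by linarith
  refine ⟨1 / 2, K, by norm_num, by linarith, fun r R hr0 hrR => ?_⟩
  set m := min (α + β₁ + β₂) 2 with hm
  have hm0 : 0 < m := lt_min (by linarith) (by norm_num)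
  have hm2 : m ≤ 2 := min_le_right _ _
  have hR0 : (0:ℝ) < R := lt_of_lt_of_le hr0 hrR
  have hIr := I_pos α β₁ β₂ hα2 hr0
  have hIR := I_pos α β₁ β₂ hα2 hR0
  set Ir := ∫ s in (0:ℝ)..r, s / phi α β₁ β₂ s with hIrdef
  set IR := ∫ s in (0:ℝ)..R, s / phi α β₁ β₂ s with hIRdef
  have ht0 : (0:ℝ) < R / r := by positivity
  have hPhi : Phi α β₁ β₂ R / Phi α β₁ β₂ r = ((R / r) ^ ((2:ℝ)) * Ir) / IR := by
    rw [Phi, Phi, show ((2:ℝ)) = ((2:ℕ):ℝ) by norm_num, Real.rpow_natCast, div_pow,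
      ← hIrdef, ← hIRdef]
    field_simp
  rw [hPhi]
  constructor
  · rw [le_div_iff₀ hIR]
    have hi := I_ratio_upper α β₁ β₂ hα2 hβ hr0 hrR
    rw [← hIrdef, ← hIRdef] at hi
    have h := mul_le_mul_of_nonneg_left hi
      (by positivity : (0:ℝ) ≤ 1 / 2 * (R / r) ^ α)
    calc 1 / 2 * (R / r) ^ α * IR
        ≤ 1 / 2 * (R / r) ^ α * (2 * (R / r) ^ (2 - α) * Ir) := h
      _ = ((R / r) ^ α * (R / r) ^ (2 - α)) * Ir := by ring
      _ = (R / r) ^ ((2:ℝ)) * Ir := by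
          rw [← Real.rpow_add ht0, show α + (2 - α) = (2:ℝ) by ring]
  · rw [div_le_iff₀ hIR]
    have hii := hK r R hr0 hrR
    rw [← hIrdef, ← hIRdef] at hii
    have h := mul_le_mul_of_nonneg_left hii
      (by positivity : (0:ℝ) ≤ (R / r) ^ m)
    calc (R / r) ^ ((2:ℝ)) * Ir = (R / r) ^ m * ((R / r) ^ (2 - m) * Ir) := by
          rw [← mul_assoc, ← Real.rpow_add ht0, show m + (2 - m) = (2:ℝ) by ring]
      _ ≤ (R / r) ^ m * (K * IR) := h
      _ = K * (R / r) ^ m * IR := by ring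

end
end

section
/- Let d ≥ 2 and let β₁ > β₂ ≥ 0 and β₃, β₄ ≥ 0. There exists a constant c > 0, depending only on d, β₁, β₂, β₃, β₄, such that for every z₀ ∈ ∂ℝ^d_+, every η ∈ (0, 1/4], and every z ∈ ℝ^d_+ with 0 < z_d ≤ 1/8, one has ∫_{ℝ^d_+ ∩ B(z₀, η)} (z_d ∨ y_d)^{−(β₁−β₂)} (log(1 + (z_d ∨ y_d)/(z_d ∧ y_d)))^{β₃} (log(1/(z_d ∨ y_d)))^{β₄} dy ≤ c · z_d^{−(β₁−β₂)} ∫_{ℝ^d_+ ∩ B(z₀, η)} |log y_d|^{β₃+β₄} dy. -/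
open MeasureTheory Real

noncomputable section

lemma aux_pow_log (α β₃ : ℝ) (hα : 0 < α) (hβ₃ : 0 ≤ β₃) :
    ∃ C : ℝ, 0 < C ∧ ∀ t : ℝ, 1 ≤ t → t ^ (-α) * (Real.log (2 * t)) ^ β₃ ≤ C := by
  set ε := α / (β₃ + 1) with hεdef
  have hε0 : 0 < ε := div_pos hα (by linarith)
  refine ⟨(2 : ℝ) ^ (ε * β₃) / ε ^ β₃, by positivity, ?_⟩
  intro t ht
  have ht0 : 0 < t := lt_of_lt_of_le one_pos ht
  have h2t : (1 : ℝ) ≤ 2 * t := by linarith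
  have h2t0 : (0 : ℝ) < 2 * t := by linarith
  have hlog : Real.log (2 * t) ≤ (2 * t) ^ ε / ε :=
    Real.log_le_rpow_div h2t0.le hε0
  have h1 : (Real.log (2 * t)) ^ β₃ ≤ ((2 * t) ^ ε / ε) ^ β₃ :=
    Real.rpow_le_rpow (Real.log_nonneg h2t) hlog hβ₃
  have h2 : ((2 * t) ^ ε / ε) ^ β₃ = (2 : ℝ) ^ (ε * β₃) * t ^ (ε * β₃) / ε ^ β₃ := by
    rw [Real.div_rpow (by positivity) hε0.le, ← Real.rpow_mul h2t0.le,
      Real.mul_rpow (by norm_num) ht0.le]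
  have hεβ : ε * β₃ ≤ α := by
    rw [hεdef]
    rw [div_mul_eq_mul_div, div_le_iff₀ (by linarith)]
    nlinarith
  have h3 : t ^ (-α) * t ^ (ε * β₃) ≤ 1 := by
    rw [← Real.rpow_add ht0]
    exact Real.rpow_le_one_of_one_le_of_nonpos ht (by linarith)
  have ht' : (0:ℝ) ≤ t ^ (-α) := Real.rpow_nonneg ht0.le _
  calc t ^ (-α) * (Real.log (2 * t)) ^ β₃
      ≤ t ^ (-α) * ((2 : ℝ) ^ (ε * β₃) * t ^ (ε * β₃) / ε ^ β₃) := by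
        rw [← h2]; exact mul_le_mul_of_nonneg_left h1 ht'
    _ = (t ^ (-α) * t ^ (ε * β₃)) * ((2 : ℝ) ^ (ε * β₃) / ε ^ β₃) := by ring
    _ ≤ 1 * ((2 : ℝ) ^ (ε * β₃) / ε ^ β₃) :=
        mul_le_mul_of_nonneg_right h3 (by positivity)
    _ = (2 : ℝ) ^ (ε * β₃) / ε ^ β₃ := one_mul _

lemma one_le_log_four : (1 : ℝ) ≤ Real.log 4 := by
  rw [Real.le_log_iff_exp_le (by norm_num)]
  have := Real.exp_one_lt_d9
  linarith

lemma ptwise (β₁ β₂ β₃ β₄ : ℝ) (hβ₂₁ : β₂ < β₁) (hβ₃ : 0 ≤ β₃) (hβ₄ : 0 ≤ β₄) :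
    ∃ C : ℝ, 0 < C ∧ ∀ z y : ℝ, 0 < z → z ≤ 1 / 8 → 0 < y → y < 1 / 4 →
      (max z y) ^ (-(β₁ - β₂)) * (Real.log (1 + max z y / min z y)) ^ β₃ *
        (Real.log (1 / max z y)) ^ β₄ ≤ C * z ^ (-(β₁ - β₂)) * |Real.log y| ^ (β₃ + β₄) := by
  set α := β₁ - β₂ with hαdef
  have hα : 0 < α := by simp [hαdef]; linarith
  obtain ⟨C₂, hC₂, hC₂le⟩ := aux_pow_log α β₃ hα hβ₃
  refine ⟨(2 : ℝ) ^ β₃ + C₂, by positivity, ?_⟩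
  intro z y hz hz8 hy hy4
  have hly : |Real.log y| = Real.log (1 / y) := by
    rw [Real.log_div one_ne_zero hy.ne', Real.log_one, zero_sub, abs_of_nonpos]
    exact Real.log_nonpos hy.le (by linarith)
  have hly4 : Real.log 4 ≤ Real.log (1 / y) :=
    Real.log_le_log (by norm_num) (by rw [le_div_iff₀ hy]; linarith)
  have hly1 : (1 : ℝ) ≤ |Real.log y| := by
    rw [hly]; exact le_trans one_le_log_four hly4
  have hly0 : (0 : ℝ) < |Real.log y| := lt_of_lt_of_le one_pos hly1
  have hzα : (0:ℝ) ≤ z ^ (-α) := Real.rpow_nonneg hz.le _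
  rcases le_or_gt y z with hyz | hyz
  · -- case y ≤ z : max = z, min = y
    rw [max_eq_left hyz, min_eq_right hyz]
    have hzy1 : (1 : ℝ) ≤ z / y := (one_le_div hy).mpr hyz
    have h3 : Real.log (1 + z / y) ≤ 2 * |Real.log y| := by
      have e1 : Real.log (1 + z / y) ≤ Real.log (2 * (z / y)) :=
        Real.log_le_log (by linarith) (by linarith)
      have e2 : Real.log (2 * (z / y)) = Real.log 2 + Real.log z - Real.log y := by
        rw [Real.log_mul (by norm_num) (by positivity), Real.log_div hz.ne' hy.ne']
        ring
      have e3 : Real.log 2 ≤ |Real.log y| := by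
        rw [hly]
        exact le_trans (Real.log_le_log (by norm_num) (by norm_num)) hly4
      have e4 : Real.log z ≤ 0 := Real.log_nonpos hz.le (by linarith)
      have e5 : -Real.log y ≤ |Real.log y| := neg_le_abs _
      linarith
    have h3' : (Real.log (1 + z / y)) ^ β₃ ≤ (2:ℝ) ^ β₃ * |Real.log y| ^ β₃ := by
      rw [← Real.mul_rpow (by norm_num) hly0.le]
      exact Real.rpow_le_rpow (Real.log_nonneg (by linarith)) h3 hβ₃
    have h4 : (Real.log (1 / z)) ^ β₄ ≤ |Real.log y| ^ β₄ := by
      rw [hly]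
      refine Real.rpow_le_rpow (Real.log_nonneg ?_) (Real.log_le_log (by positivity) ?_) hβ₄
      · rw [le_div_iff₀ hz]; linarith
      · exact one_div_le_one_div_of_le hy hyz
    have hl3 : (0:ℝ) ≤ (Real.log (1 + z / y)) ^ β₃ := Real.rpow_nonneg (Real.log_nonneg (by linarith)) _
    have hl4 : (0:ℝ) ≤ (Real.log (1 / z)) ^ β₄ := Real.rpow_nonneg (Real.log_nonneg (by rw [le_div_iff₀ hz]; linarith)) _
    calc z ^ (-α) * (Real.log (1 + z / y)) ^ β₃ * (Real.log (1 / z)) ^ β₄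
        ≤ z ^ (-α) * ((2:ℝ) ^ β₃ * |Real.log y| ^ β₃) * |Real.log y| ^ β₄ := by
          apply mul_le_mul (mul_le_mul_of_nonneg_left h3' hzα) h4 hl4
          positivity
      _ = (2:ℝ) ^ β₃ * z ^ (-α) * (|Real.log y| ^ β₃ * |Real.log y| ^ β₄) := by ring
      _ = (2:ℝ) ^ β₃ * z ^ (-α) * |Real.log y| ^ (β₃ + β₄) := by
          rw [← Real.rpow_add hly0]
      _ ≤ ((2:ℝ) ^ β₃ + C₂) * z ^ (-α) * |Real.log y| ^ (β₃ + β₄) := by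
          have : (0:ℝ) ≤ |Real.log y| ^ (β₃ + β₄) := Real.rpow_nonneg hly0.le _
          nlinarith [mul_nonneg (mul_nonneg hC₂.le hzα) this]
  · -- case z < y : max = y, min = z
    rw [max_eq_right hyz.le, min_eq_left hyz.le]
    set t := y / z with htdef
    have ht1 : (1 : ℝ) ≤ t := le_of_lt ((one_lt_div hz).mpr hyz)
    have ht0 : (0 : ℝ) < t := lt_of_lt_of_le one_pos ht1
    have hyzt : y = z * t := by rw [htdef]; field_simp
    have h3 : (Real.log (1 + y / z)) ^ β₃ ≤ (Real.log (2 * t)) ^ β₃ := by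
      refine Real.rpow_le_rpow (Real.log_nonneg (by rw [← htdef]; linarith)) ?_ hβ₃
      exact Real.log_le_log (by rw [← htdef]; linarith) (by rw [← htdef]; linarith)
    have hyα : y ^ (-α) = z ^ (-α) * t ^ (-α) := by
      rw [hyzt, Real.mul_rpow hz.le ht0.le]
    have h4 : (Real.log (1 / y)) ^ β₄ ≤ |Real.log y| ^ (β₃ + β₄) := by
      rw [← hly]
      exact Real.rpow_le_rpow_of_exponent_le hly1 (by linarith)
    have hl4 : (0:ℝ) ≤ (Real.log (1 / y)) ^ β₄ :=
      Real.rpow_nonneg (Real.log_nonneg (by rw [le_div_iff₀ hy]; linarith)) _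
    have hl3 : (0:ℝ) ≤ (Real.log (1 + y / z)) ^ β₃ :=
      Real.rpow_nonneg (Real.log_nonneg (by rw [← htdef]; linarith)) _
    have hyαnn : (0:ℝ) ≤ y ^ (-α) := Real.rpow_nonneg hy.le _
    calc y ^ (-α) * (Real.log (1 + y / z)) ^ β₃ * (Real.log (1 / y)) ^ β₄
        ≤ y ^ (-α) * (Real.log (2 * t)) ^ β₃ * |Real.log y| ^ (β₃ + β₄) := by
          apply mul_le_mul (mul_le_mul_of_nonneg_left h3 hyαnn) h4 hl4
          exact mul_nonneg hyαnn (Real.rpow_nonneg (Real.log_nonneg (by linarith)) _)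
      _ = z ^ (-α) * (t ^ (-α) * (Real.log (2 * t)) ^ β₃) * |Real.log y| ^ (β₃ + β₄) := by
          rw [hyα]; ring
      _ ≤ z ^ (-α) * C₂ * |Real.log y| ^ (β₃ + β₄) := by
          have h5 := hC₂le t ht1
          have : (0:ℝ) ≤ |Real.log y| ^ (β₃ + β₄) := Real.rpow_nonneg hly0.le _
          apply mul_le_mul_of_nonneg_right _ this
          exact mul_le_mul_of_nonneg_left h5 hzα
      _ ≤ ((2:ℝ) ^ β₃ + C₂) * z ^ (-α) * |Real.log y| ^ (β₃ + β₄) := by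
          have h6 : (0:ℝ) ≤ |Real.log y| ^ (β₃ + β₄) := Real.rpow_nonneg hly0.le _
          have h7 : (0:ℝ) < (2:ℝ) ^ β₃ := Real.rpow_pos_of_pos (by norm_num) _
          nlinarith [mul_nonneg (mul_nonneg h7.le hzα) h6]

theorem stmt_18 (d : ℕ) (hd : 2 ≤ d) (β₁ β₂ β₃ β₄ : ℝ)
    (hβ₂0 : 0 ≤ β₂) (hβ₂₁ : β₂ < β₁) (hβ₃ : 0 ≤ β₃) (hβ₄ : 0 ≤ β₄) :
    ∃ c : ℝ, 0 < c ∧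
      ∀ z₀ : Pt (d - 1), z₀.2 = 0 →
      ∀ η : ℝ, 0 < η → η ≤ 1 / 4 →
      ∀ z : Pt (d - 1), 0 < z.2 → z.2 ≤ 1 / 8 →
        (∫⁻ y in {y : Pt (d - 1) | 0 < y.2 ∧ nrm (y - z₀) < η},
            ENNReal.ofReal
              ((max z.2 y.2) ^ (-(β₁ - β₂)) *
                (Real.log (1 + max z.2 y.2 / min z.2 y.2)) ^ β₃ *
                (Real.log (1 / max z.2 y.2)) ^ β₄))
          ≤ ENNReal.ofReal (c * z.2 ^ (-(β₁ - β₂))) *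
              ∫⁻ y in {y : Pt (d - 1) | 0 < y.2 ∧ nrm (y - z₀) < η},
                ENNReal.ofReal (|Real.log y.2| ^ (β₃ + β₄)) := by
  obtain ⟨C, hC, hpt⟩ := ptwise β₁ β₂ β₃ β₄ hβ₂₁ hβ₃ hβ₄
  refine ⟨C, hC, ?_⟩
  intro z₀ hz₀ η hη hη4 z hz hz8
  set S := {y : Pt (d - 1) | 0 < y.2 ∧ nrm (y - z₀) < η} with hSdef
  have hScont : Continuous fun y : Pt (d - 1) => nrm (y - z₀) := by
    unfold nrm
    fun_prop
  have hSmeas : MeasurableSet S := by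
    exact ((isOpen_lt continuous_const continuous_snd).inter
      (isOpen_lt hScont continuous_const)).measurableSet
  have hczα : (0:ℝ) ≤ C * z.2 ^ (-(β₁ - β₂)) := mul_nonneg hC.le (Real.rpow_nonneg hz.le _)
  calc (∫⁻ y in S, ENNReal.ofReal
          ((max z.2 y.2) ^ (-(β₁ - β₂)) *
            (Real.log (1 + max z.2 y.2 / min z.2 y.2)) ^ β₃ *
            (Real.log (1 / max z.2 y.2)) ^ β₄))
      ≤ ∫⁻ y in S, ENNReal.ofReal (C * z.2 ^ (-(β₁ - β₂))) *
          ENNReal.ofReal (|Real.log y.2| ^ (β₃ + β₄)) := by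
        apply setLIntegral_mono' hSmeas
        intro y hy
        obtain ⟨hy0, hynrm⟩ := hy
        have hy4 : y.2 < 1 / 4 := by
          have h1 : |y.2| ≤ nrm (y - z₀) := by
            have h2 : (y - z₀).2 = y.2 := by simp [hz₀]
            rw [nrm, ← h2]
            calc |(y - z₀).2| = Real.sqrt ((y - z₀).2 ^ 2) := (Real.sqrt_sq_eq_abs _).symm
              _ ≤ Real.sqrt (‖(y - z₀).1‖ ^ 2 + (y - z₀).2 ^ 2) :=
                  Real.sqrt_le_sqrt (le_add_of_nonneg_left (by positivity))
          have := le_trans h1 hynrm.le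
          have := le_abs_self y.2
          linarith
        rw [← ENNReal.ofReal_mul hczα]
        exact ENNReal.ofReal_le_ofReal (hpt z.2 y.2 hz hz8 hy0 hy4)
    _ = ENNReal.ofReal (C * z.2 ^ (-(β₁ - β₂))) *
          ∫⁻ y in S, ENNReal.ofReal (|Real.log y.2| ^ (β₃ + β₄)) :=
        lintegral_const_mul' _ _ ENNReal.ofReal_ne_top

end
end
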